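/- arXiv:2602.23897 — 7 statements merged into one kernel-verified Lean document; each statement's English description precedes it below -/
import Mathlib

section
/- Let S be a finite set with |S| = s ≥ 3 and let 𝒜 be a hypercompletely separating system on S, i.e., a family of subsets of S such that for every a ∈ S there exist A, B ∈ 𝒜 with A ∩ B = {a}. Then |𝒜| ≥ ⌈(1 + √(8s+1))/2⌉. -/
theorem stmt_6 {α : Type*} [DecidableEq α] (S : Finset α) (hS : 3 ≤ S.card)
    (𝒜 : Finset (Finset α)) (hsub : ∀ A ∈ 𝒜, A ⊆ S)
    (hcsp : ∀ a ∈ S, ∃ A ∈ 𝒜, ∃ B ∈ 𝒜, A ∩ B = {a}) :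
    ⌈(1 + Real.sqrt (8 * S.card + 1)) / 2⌉ ≤ (𝒜.card : ℤ) := by
  classical
  set n := 𝒜.card with hn
  set s := S.card with hs
  -- diagonal elements: those separated only by a pair A = B
  set D : Finset α :=
    S.filter (fun a => ¬ ∃ A ∈ 𝒜, ∃ B ∈ 𝒜, A ≠ B ∧ A ∩ B = {a}) with hD
  have hDsub : D ⊆ S := Finset.filter_subset _ _
  have hDdiag : ∀ a ∈ D, ¬ ∃ A ∈ 𝒜, ∃ B ∈ 𝒜, A ≠ B ∧ A ∩ B = {a} := by
    intro a ha
    exact (Finset.mem_filter.mp ha).2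
  have hsing : ∀ a ∈ D, ({a} : Finset α) ∈ 𝒜 := by
    intro a ha
    obtain ⟨A, hA, B, hB, hAB⟩ := hcsp a (hDsub ha)
    by_cases h : A = B
    · subst h
      have : A = {a} := by rwa [Finset.inter_self] at hAB
      rwa [← this]
    · exact absurd ⟨A, hA, B, hB, h, hAB⟩ (hDdiag a ha)
  set D' : Finset (Finset α) := D.image (fun a => ({a} : Finset α)) with hD'
  have hD'sub : D' ⊆ 𝒜 := by
    intro X hX
    obtain ⟨a, ha, rfl⟩ := Finset.mem_image.mp hX
    exact hsing a ha
  have hD'card : D'.card = D.card :=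
    Finset.card_image_of_injective _ (fun a b h => Finset.singleton_injective h)
  set T : Finset α := S \ D with hT
  have hpair : ∀ b : α, ∃ p : Finset α × Finset α,
      b ∈ T → p.1 ∈ 𝒜 ∧ p.2 ∈ 𝒜 ∧ p.1 ≠ p.2 ∧ p.1 ∩ p.2 = {b} := by
    intro b
    by_cases hb : b ∈ T
    · have hbS : b ∈ S := (Finset.mem_sdiff.mp hb).1
      have hbD : b ∉ D := (Finset.mem_sdiff.mp hb).2
      have : ∃ A ∈ 𝒜, ∃ B ∈ 𝒜, A ≠ B ∧ A ∩ B = {b} := by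
        by_contra h
        exact hbD (Finset.mem_filter.mpr ⟨hbS, h⟩)
      obtain ⟨A, hA, B, hB, hne, hint⟩ := this
      exact ⟨(A, B), fun _ => ⟨hA, hB, hne, hint⟩⟩
    · exact ⟨(∅, ∅), fun h => absurd h hb⟩
  choose p hp using hpair
  -- the map into 2-element subsets of 𝒜 \ D'
  have hTcard : T.card ≤ (n - D.card).choose 2 := by
    have hinj : ∀ b ∈ T, ({(p b).1, (p b).2} : Finset (Finset α)) ∈
        (𝒜 \ D').powersetCard 2 := by
      intro b hb
      obtain ⟨hA, hB, hne, hint⟩ := hp b hb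
      have hnotD : ∀ X ∈ 𝒜, X ∈ ({(p b).1, (p b).2} : Finset (Finset α)) → X ∉ D' := by
        intro X hXA hXmem hXD'
        obtain ⟨a, haD, rfl⟩ := Finset.mem_image.mp hXD'
        have hbmem : b ∈ (p b).1 ∩ (p b).2 := by
          rw [hint]; exact Finset.mem_singleton_self b
        rcases Finset.mem_insert.mp hXmem with h1 | h1
        · -- {a} = (p b).1
          have hba : b = a := by
            have hb1 : b ∈ ({a} : Finset α) := by
              rw [h1]; exact (Finset.mem_inter.mp hbmem).1
            exact Finset.mem_singleton.mp hb1
          exact hDdiag a haD ⟨(p b).1, hA, (p b).2, hB, hne, by rw [hint, hba]⟩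
        · have h1 : ({a} : Finset α) = (p b).2 := Finset.mem_singleton.mp h1
          have hba : b = a := by
            have hb1 : b ∈ ({a} : Finset α) := by
              rw [h1]; exact (Finset.mem_inter.mp hbmem).2
            exact Finset.mem_singleton.mp hb1
          exact hDdiag a haD ⟨(p b).1, hA, (p b).2, hB, hne, by rw [hint, hba]⟩
      rw [Finset.mem_powersetCard]
      constructor
      · intro X hX
        have hXA : X ∈ 𝒜 := by
          rcases Finset.mem_insert.mp hX with h1 | h1
          · rw [h1]; exact hA
          · rw [Finset.mem_singleton.mp h1]; exact hB
        exact Finset.mem_sdiff.mpr ⟨hXA, hnotD X hXA hX⟩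
      · exact Finset.card_pair hne
    have hinjOn : Set.InjOn (fun b => ({(p b).1, (p b).2} : Finset (Finset α))) T := by
      intro b1 hb1 b2 hb2 heq
      simp only at heq
      obtain ⟨hA1, hB1, hne1, hint1⟩ := hp b1 hb1
      obtain ⟨hA2, hB2, hne2, hint2⟩ := hp b2 hb2
      have hm1 : (p b2).1 ∈ ({(p b1).1, (p b1).2} : Finset (Finset α)) := by
        rw [heq]; exact Finset.mem_insert_self _ _
      have hm2 : (p b2).2 ∈ ({(p b1).1, (p b1).2} : Finset (Finset α)) := by
        rw [heq]; exact Finset.mem_insert.mpr (Or.inr (Finset.mem_singleton_self _))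
      have hii : (p b1).1 ∩ (p b1).2 = (p b2).1 ∩ (p b2).2 := by
        have h1 := Finset.mem_insert.mp hm1
        have h2 := Finset.mem_insert.mp hm2
        simp only [Finset.mem_singleton] at h1 h2
        rcases h1 with h1 | h1 <;> rcases h2 with h2 | h2
        · exact absurd (h1.trans h2.symm) hne2
        · rw [h1, h2]
        · rw [h1, h2, Finset.inter_comm]
        · exact absurd (h1.trans h2.symm) hne2
      have : ({b1} : Finset α) = {b2} := by rw [← hint1, ← hint2, hii]
      exact Finset.singleton_injective this
    have := Finset.card_le_card_of_injOn _ (fun b hb => hinj b hb) hinjOn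
    rwa [Finset.card_powersetCard, Finset.card_sdiff_of_subset hD'sub, hD'card] at this
  have hks : D.card ≤ s := Finset.card_le_card hDsub
  have hkn : D.card ≤ n := hD'card ▸ Finset.card_le_card hD'sub
  have hsplit : s = D.card + T.card := by
    rw [hT, Finset.card_sdiff_of_subset hDsub]
    omega
  -- key: 2 * s ≤ n * (n - 1), in ℤ
  have hkey : 2 * (s : ℤ) ≤ (n : ℤ) * ((n : ℤ) - 1) := by
    set k := D.card with hk
    have hchoose : ((n - k).choose 2 : ℤ) * 2 = ((n : ℤ) - k) * ((n : ℤ) - k - 1) := by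
      have h1 : (n - k).choose 2 = (n - k) * (n - k - 1) / 2 := Nat.choose_two_right _
      have h2 : 2 ∣ (n - k) * (n - k - 1) := by
        rcases Nat.even_or_odd (n - k) with h | h
        · exact Dvd.dvd.mul_right h.two_dvd _
        · refine Dvd.dvd.mul_left ?_ _
          rcases h with ⟨m, hm⟩
          omega
      have h3 : (n - k).choose 2 * 2 = (n - k) * (n - k - 1) := by
        rw [h1, Nat.div_mul_cancel h2]
      have := congrArg (fun x : ℕ => (x : ℤ)) h3
      push_cast at this
      rw [this]
      have : ((n : ℤ) - k) * (((n : ℤ) - k) - 1) = ((n - k : ℕ) : ℤ) * (((n - k : ℕ) : ℤ) - 1) := by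
        push_cast [Nat.cast_sub hkn]
        ring
      rw [this]
      rcases Nat.eq_zero_or_pos (n - k) with h | h
      · simp [h]
      · push_cast [Nat.cast_sub (by omega : 1 ≤ n - k)]
        ring
    have hs3 : (3 : ℤ) ≤ s := by exact_mod_cast hS
    have hT2 : (s : ℤ) ≤ k + ((n - k).choose 2 : ℤ) := by
      have : s ≤ k + (n - k).choose 2 := hsplit ▸ Nat.add_le_add_left hTcard k
      exact_mod_cast this
    have hknZ : (k : ℤ) ≤ n := by exact_mod_cast hkn
    have hk0 : (0 : ℤ) ≤ k := Int.natCast_nonneg _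
    nlinarith [hchoose, hT2, hs3, hknZ, hk0,
      mul_nonneg hk0 (sub_nonneg.mpr hknZ),
      sq_nonneg ((n : ℤ) - k - 1), sq_nonneg ((n : ℤ) - k)]
  -- finish analytically
  have hn0 : (0 : ℤ) ≤ 2 * (n : ℤ) - 1 := by nlinarith
  rw [Int.ceil_le]
  push_cast
  have hsq : Real.sqrt (8 * s + 1) ≤ 2 * (n : ℝ) - 1 := by
    have h0 : (0 : ℝ) ≤ 2 * (n : ℝ) - 1 := by exact_mod_cast hn0
    rw [show (2 * (n : ℝ) - 1) = Real.sqrt ((2 * (n : ℝ) - 1) ^ 2) from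
      (Real.sqrt_sq h0).symm]
    apply Real.sqrt_le_sqrt
    have : 2 * (s : ℝ) ≤ (n : ℝ) * ((n : ℝ) - 1) := by exact_mod_cast hkey
    nlinarith
  linarith
end

section
/- Let k ≥ 3, let S be a finite set with |S| = α(k) = k(k+1)/2, and let 𝒜 be an HCSP-system on S with |𝒜| = k + 1. Then for every a ∈ S there is a unique unordered pair {A, B} of distinct members of 𝒜 with A ∩ B = {a}. -/
private def pairInf {α : Type*} [DecidableEq α] (p : Finset (Finset α)) : Finset α :=
  (p.sup id).filter (fun x => ∀ A ∈ p, x ∈ A)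

private lemma pairInf_pair {α : Type*} [DecidableEq α] (A B : Finset α) :
    pairInf {A, B} = A ∩ B := by
  ext x
  simp only [pairInf, Finset.mem_filter, Finset.mem_sup, Finset.mem_inter,
    Finset.mem_insert, Finset.mem_singleton, id]
  constructor
  · rintro ⟨_, h⟩
    exact ⟨h A (Or.inl rfl), h B (Or.inr rfl)⟩
  · rintro ⟨hA, hB⟩
    exact ⟨⟨A, Or.inl rfl, hA⟩, by rintro C (rfl | rfl) <;> assumption⟩

theorem stmt_14 {α : Type*} [DecidableEq α] (k : ℕ) (hk : 3 ≤ k)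
    (S : Finset α) (hS : S.card = k * (k + 1) / 2)
    (𝒜 : Finset (Finset α)) (hsub : ∀ A ∈ 𝒜, A ⊆ S)
    (hcsp : ∀ a ∈ S, ∃ A ∈ 𝒜, ∃ B ∈ 𝒜, A ∩ B = {a})
    (hcard : 𝒜.card = k + 1) :
    ∀ a ∈ S, ∃ A ∈ 𝒜, ∃ B ∈ 𝒜, A ≠ B ∧ A ∩ B = {a} ∧
      ∀ C ∈ 𝒜, ∀ D ∈ 𝒜, C ≠ D → C ∩ D = {a} →
        ({C, D} : Finset (Finset α)) = {A, B} := by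
  classical
  set P : Finset (Finset (Finset α)) := 𝒜.powersetCard 2 with hPdef
  have hPchoose : P.card = (k + 1).choose 2 := by
    rw [hPdef, Finset.card_powersetCard, hcard]
  have hPcard : P.card = k * (k + 1) / 2 := by
    rw [hPchoose, Nat.choose_two_right, Nat.add_sub_cancel, Nat.mul_comm]
  -- structure of elements of P
  have hPstruct : ∀ p ∈ P, ∃ A B, A ∈ 𝒜 ∧ B ∈ 𝒜 ∧ A ≠ B ∧ p = {A, B} ∧
      pairInf p = A ∩ B := by
    intro p hp
    rw [hPdef, Finset.mem_powersetCard] at hp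
    obtain ⟨A, B, hAB, rfl⟩ := Finset.card_eq_two.mp hp.2
    refine ⟨A, B, ?_, ?_, hAB, rfl, ?_⟩
    · exact hp.1 (by simp)
    · exact hp.1 (by simp)
    · exact pairInf_pair A B
  have hmk : ∀ A B : Finset α, A ∈ 𝒜 → B ∈ 𝒜 → A ≠ B →
      ({A, B} : Finset (Finset α)) ∈ P ∧
      pairInf ({A, B} : Finset (Finset α)) = A ∩ B := by
    intro A B hA hB hAB
    constructor
    · rw [hPdef, Finset.mem_powersetCard]
      constructor
      · intro X hX
        simp at hX
        rcases hX with rfl | rfl <;> assumption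
      · rw [Finset.card_insert_of_notMem (by simp [hAB]), Finset.card_singleton]
    · exact pairInf_pair A B
  -- the "good" predicate and the choice function
  set good : α → Prop := fun a => ∃ p, p ∈ P ∧ pairInf p = {a} with hgood
  set f : α → Finset (Finset α) :=
    fun a => if h : good a then h.choose else ∅ with hfdef
  have hf : ∀ a, good a → f a ∈ P ∧ pairInf (f a) = {a} := by
    intro a h
    simp only [hfdef, dif_pos h]
    exact h.choose_spec
  set S₁ : Finset α := S.filter good with hS₁
  set S₂ : Finset α := S.filter (fun a => ¬ good a) with hS₂
  have hsplit : S₁.card + S₂.card = S.card := by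
    rw [hS₁, hS₂]
    exact Finset.card_filter_add_card_filter_not _
  -- key counting lemma
  have key : ∀ E : Finset (Finset (Finset α)), E ⊆ P →
      (∀ p ∈ E, pairInf p = ∅) → S₁.card + E.card ≤ P.card := by
    intro E hEP hE
    have hmaps : ∀ a ∈ S₁, f a ∈ P \ E := by
      intro a ha
      rw [hS₁, Finset.mem_filter] at ha
      obtain ⟨hfa, hinf⟩ := hf a ha.2
      rw [Finset.mem_sdiff]
      refine ⟨hfa, fun hmem => ?_⟩
      have := hE _ hmem
      rw [hinf] at this
      exact Finset.singleton_ne_empty a this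
    have hinj : Set.InjOn f S₁ := by
      intro a ha b hb hab
      rw [Finset.coe_filter] at ha hb
      have h1 := (hf a ha.2).2
      have h2 := (hf b hb.2).2
      rw [hab, h2] at h1
      exact (Finset.singleton_inj.mp h1.symm)
    have h1 : S₁.card ≤ (P \ E).card :=
      Finset.card_le_card_of_injOn f hmaps hinj
    rw [Finset.card_sdiff_of_subset hEP] at h1
    have h2 : E.card ≤ P.card := Finset.card_le_card hEP
    omega
  -- properties of elements of S₂
  have hS₂prop : ∀ a ∈ S₂, ({a} : Finset α) ∈ 𝒜 ∧
      ∀ C ∈ 𝒜, C ≠ {a} → a ∉ C := by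
    intro a ha
    rw [hS₂, Finset.mem_filter] at ha
    obtain ⟨haS, hng⟩ := ha
    obtain ⟨A, hA, B, hB, hABa⟩ := hcsp a haS
    have hAB : A = B := by
      by_contra hne
      exact hng ⟨{A, B}, (hmk A B hA hB hne).1, by rw [(hmk A B hA hB hne).2, hABa]⟩
    subst hAB
    rw [Finset.inter_self] at hABa
    subst hABa
    refine ⟨hA, fun C hC hCne haC => ?_⟩
    have hint : ({a} : Finset α) ∩ C = {a} := by
      apply Finset.Subset.antisymm
      · exact Finset.inter_subset_left
      · intro x hx
        rw [Finset.mem_singleton] at hx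
        rw [hx]
        exact Finset.mem_inter.mpr ⟨Finset.mem_singleton_self a, haC⟩
    exact hng ⟨{{a}, C}, (hmk _ _ hA hC (Ne.symm hCne)).1,
      by rw [(hmk _ _ hA hC (Ne.symm hCne)).2, hint]⟩
  have hS₂card : S₂.card ≤ k + 1 := by
    rw [← hcard]
    apply Finset.card_le_card_of_injOn (fun a => ({a} : Finset α))
    · intro a ha
      exact (hS₂prop a ha).1
    · intro a _ b _ h
      exact Finset.singleton_inj.mp h
  -- Stage 1: S₂ empty, else at least k elements in S₂
  have hS₂big : S₂.Nonempty → k ≤ S₂.card := by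
    rintro ⟨a, ha⟩
    obtain ⟨hsa, hnot⟩ := hS₂prop a ha
    set E : Finset (Finset (Finset α)) :=
      (𝒜.erase {a}).image (fun C => ({{a}, C} : Finset (Finset α))) with hEdef
    have hEP : E ⊆ P := by
      intro p hp
      rw [hEdef, Finset.mem_image] at hp
      obtain ⟨C, hC, rfl⟩ := hp
      exact (hmk _ _ hsa (Finset.mem_of_mem_erase hC)
        (Ne.symm (Finset.ne_of_mem_erase hC))).1
    have hEempty : ∀ p ∈ E, pairInf p = ∅ := by
      intro p hp
      rw [hEdef, Finset.mem_image] at hp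
      obtain ⟨C, hC, rfl⟩ := hp
      rw [(hmk _ _ hsa (Finset.mem_of_mem_erase hC)
        (Ne.symm (Finset.ne_of_mem_erase hC))).2]
      rw [Finset.eq_empty_iff_forall_notMem]
      intro x hx
      rw [Finset.mem_inter, Finset.mem_singleton] at hx
      obtain ⟨rfl, hxC⟩ := hx
      exact hnot C (Finset.mem_of_mem_erase hC) (Finset.ne_of_mem_erase hC) hxC
    have hEcard : E.card = k := by
      rw [hEdef, Finset.card_image_of_injOn, Finset.card_erase_of_mem hsa, hcard]
      · omega
      · intro C hC D hD h
        simp only [Finset.coe_erase, Set.mem_diff, Finset.mem_coe] at hC hD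
        have h' : ({{a}, C} : Finset (Finset α)) = {{a}, D} := h
        have : C ∈ ({{a}, D} : Finset (Finset α)) := by
          rw [← h']; simp
        simp at this
        rcases this with h' | h'
        · exact absurd h' (by simpa using hC.2)
        · exact h'
    have := key E hEP hEempty
    omega
  -- Stage 2: S₂ is empty
  have hS₂empty : S₂ = ∅ := by
    by_contra hne
    have hne' : S₂.Nonempty := Finset.nonempty_of_ne_empty hne
    have hk' : 3 ≤ S₂.card := le_trans hk (hS₂big hne')
    obtain ⟨t, htsub, htcard⟩ := Finset.exists_subset_card_eq hk'
    obtain ⟨a, b, c, hab, hac, hbc, rfl⟩ := Finset.card_eq_three.mp htcard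
    have ha : a ∈ S₂ := htsub (by simp)
    have hb : b ∈ S₂ := htsub (by simp)
    have hc : c ∈ S₂ := htsub (by simp)
    set T : Finset (Finset α) := {{a}, {b}, {c}} with hTdef
    have hTsub : T ⊆ 𝒜 := by
      intro X hX
      rw [hTdef] at hX
      simp at hX
      rcases hX with rfl | rfl | rfl
      exacts [(hS₂prop a ha).1, (hS₂prop b hb).1, (hS₂prop c hc).1]
    have hTcard : T.card = 3 := by
      rw [hTdef]
      rw [Finset.card_insert_of_notMem (by simp [hab, hac]),
        Finset.card_insert_of_notMem (by simp [hbc]), Finset.card_singleton]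
    set Q : Finset (Finset (Finset α)) := (𝒜 \ T).powersetCard 2 with hQdef
    have hQP : Q ⊆ P := by
      rw [hQdef, hPdef]
      exact Finset.powersetCard_mono Finset.sdiff_subset
    set E : Finset (Finset (Finset α)) := P \ Q with hEdef
    have hEP : E ⊆ P := Finset.sdiff_subset
    have hEempty : ∀ p ∈ E, pairInf p = ∅ := by
      intro p hp
      rw [hEdef, Finset.mem_sdiff] at hp
      obtain ⟨hpP, hpQ⟩ := hp
      obtain ⟨A, B, hA, hB, hAB, rfl, hinf⟩ := hPstruct p hpP
      -- some element of p is in T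
      have hX : A ∈ T ∨ B ∈ T := by
        by_contra h
        push_neg at h
        apply hpQ
        rw [hQdef, Finset.mem_powersetCard]
        constructor
        · intro X hX
          simp at hX
          rcases hX with rfl | rfl <;> rw [Finset.mem_sdiff] <;>
            exact ⟨by assumption, by tauto⟩
        · rw [Finset.card_insert_of_notMem (by simp [hAB]), Finset.card_singleton]
      rw [hinf]
      have singcase : ∀ x ∈ S₂, ∀ Y ∈ 𝒜, Y ≠ {x} → ({x} : Finset α) ∩ Y = ∅ := by
        intro x hx Y hY hYne
        rw [Finset.eq_empty_iff_forall_notMem]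
        intro z hz
        rw [Finset.mem_inter, Finset.mem_singleton] at hz
        obtain ⟨hzx, hzY⟩ := hz
        rw [hzx] at hzY
        exact (hS₂prop x hx).2 Y hY hYne hzY
      rcases hX with hX | hX
      · rw [hTdef] at hX
        simp at hX
        rcases hX with rfl | rfl | rfl
        exacts [singcase a ha B hB (fun h => hAB h.symm),
          singcase b hb B hB (fun h => hAB h.symm),
          singcase c hc B hB (fun h => hAB h.symm)]
      · rw [hTdef] at hX
        rw [Finset.inter_comm]
        simp at hX
        rcases hX with rfl | rfl | rfl
        exacts [singcase a ha A hA hAB, singcase b hb A hA hAB,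
          singcase c hc A hA hAB]
    have hQcard : Q.card = (k - 2).choose 2 := by
      rw [hQdef, Finset.card_powersetCard, Finset.card_sdiff_of_subset hTsub, hcard, hTcard]
      have h32 : k + 1 - 3 = k - 2 := by omega
      rw [h32]
    have hEcard : E.card = P.card - Q.card := Finset.card_sdiff_of_subset hQP
    -- arithmetic: P.card - Q.card = 3k - 3
    have harith : P.card - Q.card = 3 * k - 3 := by
      rw [hPchoose, hQcard]
      have e1 : ∀ n : ℕ, (n + 1).choose 2 = n.choose 2 + n := by
        intro n
        simp [Nat.choose_succ_succ, Nat.choose_one_right, Nat.add_comm]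
      obtain ⟨j, rfl⟩ := Nat.exists_eq_add_of_le hk
      have h2 : 3 + j - 2 = j + 1 := by omega
      have h3 : 3 + j + 1 = (j + 3) + 1 := by omega
      rw [h2, h3]
      have c4 := e1 (j + 3)
      have c3 := e1 (j + 2)
      have c2 := e1 (j + 1)
      have h4 : j + 2 + 1 = j + 3 := by omega
      have h5 : j + 1 + 1 = j + 2 := by omega
      rw [h4] at c3
      rw [h5] at c2
      omega
    have := key E hEP hEempty
    rw [hEcard, harith] at this
    omega
  -- so every a in S is good
  have hallgood : ∀ a ∈ S, good a := by
    intro a ha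
    by_contra h
    have : a ∈ S₂ := by rw [hS₂, Finset.mem_filter]; exact ⟨ha, h⟩
    rw [hS₂empty] at this
    exact absurd this (Finset.notMem_empty a)
  -- f is a bijection from S to P
  have himg : S.image f = P := by
    apply Finset.eq_of_subset_of_card_le
    · intro p hp
      rw [Finset.mem_image] at hp
      obtain ⟨a, ha, rfl⟩ := hp
      exact (hf a (hallgood a ha)).1
    · rw [Finset.card_image_of_injOn, hS, hPcard]
      intro a ha b hb hab
      have h1 := (hf a (hallgood a ha)).2
      have h2 := (hf b (hallgood b hb)).2
      rw [hab, h2] at h1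
      exact Finset.singleton_inj.mp h1.symm
  -- conclusion
  intro a ha
  obtain ⟨hfa, hfinf⟩ := hf a (hallgood a ha)
  obtain ⟨A, B, hA, hB, hAB, hpAB, hinfAB⟩ := hPstruct (f a) hfa
  refine ⟨A, hA, B, hB, hAB, by rw [← hinfAB, hfinf], ?_⟩
  intro C hC D hD hCD hCDa
  obtain ⟨hq, hqinf⟩ := hmk C D hC hD hCD
  rw [hCDa] at hqinf
  rw [← himg, Finset.mem_image] at hq
  obtain ⟨b, hb, hfb⟩ := hq
  have h2 := (hf b (hallgood b hb)).2
  rw [hfb] at h2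
  rw [h2] at hqinf
  have : b = a := Finset.singleton_inj.mp hqinf
  subst this
  rw [← hfb, hpAB]
end

section
/- Let k ≥ 3, let S be a finite set with |S| = α(k) = k(k+1)/2, and let 𝒜 be an HCSP-system on S with |𝒜| = k + 1. Then |A ∩ B| = 1 for all distinct A, B ∈ 𝒜. -/
lemma stmt_15_arith (k m d : ℕ) (hk : 3 ≤ k) (hd : 1 ≤ d) (hmd : m + d = k + 1)
    (hle : k * (k + 1) / 2 ≤ m.choose 2 + d) : False := by
  have h1 : k * (k + 1) / 2 * 2 = k * (k + 1) :=
    Nat.div_mul_cancel (Nat.even_mul_succ_self k).two_dvd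
  match m with
  | 0 =>
    simp only [Nat.choose] at hle
    have h0 : d = k + 1 := by omega
    have h7 : 3 * (k + 1) ≤ k * (k + 1) := Nat.mul_le_mul_right _ hk
    omega
  | m' + 1 =>
    have h2 : (m' + 1).choose 2 = m' * (m' + 1) / 2 := by
      rw [Nat.choose_two_right, Nat.succ_sub_one, Nat.mul_comm]
    have h3 : m' * (m' + 1) / 2 * 2 = m' * (m' + 1) :=
      Nat.div_mul_cancel (Nat.even_mul_succ_self m').two_dvd
    rw [h2] at hle
    have h4 : k * (k + 1) ≤ m' * (m' + 1) + 2 * d := by omega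
    have h5 : m' + d = k := by omega
    nlinarith [h4, h5, hd, hk]

theorem stmt_15 {α : Type*} [DecidableEq α] (k : ℕ) (hk : 3 ≤ k)
    (S : Finset α) (hS : S.card = k * (k + 1) / 2)
    (𝒜 : Finset (Finset α)) (hsub : ∀ A ∈ 𝒜, A ⊆ S)
    (hcsp : ∀ a ∈ S, ∃ A ∈ 𝒜, ∃ B ∈ 𝒜, A ∩ B = {a})
    (hcard : 𝒜.card = k + 1) :
    ∀ A ∈ 𝒜, ∀ B ∈ 𝒜, A ≠ B → (A ∩ B).card = 1 := by
  classical
  set P : α → Prop := fun b => ∃ p : Finset α × Finset α,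
    p.1 ∈ 𝒜 ∧ p.2 ∈ 𝒜 ∧ p.1 ≠ p.2 ∧ p.1 ∩ p.2 = {b} with hPdef
  set f : α → Finset (Finset α) := fun b =>
    if h : P b then {h.choose.1, h.choose.2} else ∅ with hfdef
  have hf : ∀ b, P b → ∃ A B, A ∈ 𝒜 ∧ B ∈ 𝒜 ∧ A ≠ B ∧ A ∩ B = {b} ∧ f b = {A, B} := by
    intro b hb
    obtain ⟨h1, h2, h3, h4⟩ := hb.choose_spec
    exact ⟨hb.choose.1, hb.choose.2, h1, h2, h3, h4, by simp [hfdef, dif_pos hb]⟩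
  -- key: from equal pairs, equal intersections
  have pairs_eq : ∀ A B C D : Finset α, A ≠ B →
      ({A, B} : Finset (Finset α)) = {C, D} → A ∩ B = C ∩ D := by
    intro A B C D hAB h
    have hAm : A ∈ ({C, D} : Finset (Finset α)) := h ▸ (by simp)
    have hBm : B ∈ ({C, D} : Finset (Finset α)) := h ▸ (by simp)
    simp only [Finset.mem_insert, Finset.mem_singleton] at hAm hBm
    rcases hAm with rfl | rfl <;> rcases hBm with rfl | rfl
    · exact absurd rfl hAB
    · rfl
    · exact Finset.inter_comm _ _
    · exact absurd rfl hAB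
  have pairinj : ∀ b c, P b → P c → f b = f c → b = c := by
    intro b c hb hc hbc
    obtain ⟨A, B, hA, hB, hAB, hIb, hfb⟩ := hf b hb
    obtain ⟨C, Dd, hC, hD, hCD, hIc, hfc⟩ := hf c hc
    rw [hfb, hfc] at hbc
    have hEq : ({b} : Finset α) = {c} := by
      rw [← hIb, ← hIc]; exact pairs_eq A B C Dd hAB hbc
    exact Finset.singleton_injective hEq
  -- the "dead" set D
  set D := S.filter (fun b => ¬ P b) with hDdef
  have hDsub : D ⊆ S := Finset.filter_subset _ _
  have hDprop : ∀ a ∈ D, ({a} : Finset α) ∈ 𝒜 ∧ ∀ C ∈ 𝒜, a ∈ C → C = {a} := by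
    intro a ha
    have haS : a ∈ S := hDsub ha
    have hnP : ¬ P a := (Finset.mem_filter.mp ha).2
    obtain ⟨A, hA, B, hB, hABi⟩ := hcsp a haS
    have hAB : A = B := by
      by_contra h
      exact hnP ⟨(A, B), hA, hB, h, hABi⟩
    subst hAB
    rw [Finset.inter_self] at hABi
    subst hABi
    refine ⟨hA, ?_⟩
    intro C hC haC
    by_contra hne
    exact hnP ⟨(({a} : Finset α), C), hA, hC, fun h => hne h.symm,
      Finset.singleton_inter_of_mem haC⟩
  have hD0 : D = ∅ := by
    by_contra hne
    obtain ⟨a0, ha0⟩ := Finset.nonempty_iff_ne_empty.mpr hne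
    set 𝒜D := D.image (fun a => ({a} : Finset α)) with h𝒜Ddef
    have h𝒜Dsub : 𝒜D ⊆ 𝒜 := by
      intro X hX
      obtain ⟨a, ha, rfl⟩ := Finset.mem_image.mp hX
      exact (hDprop a ha).1
    have hcard𝒜D : 𝒜D.card = D.card :=
      Finset.card_image_of_injective _ Finset.singleton_injective
    have hmaps : ∀ b ∈ S \ D, f b ∈ (𝒜 \ 𝒜D).powersetCard 2 := by
      intro b hb
      have hbS := (Finset.mem_sdiff.mp hb).1
      have hbD := (Finset.mem_sdiff.mp hb).2
      have hPb : P b := by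
        by_contra h; exact hbD (Finset.mem_filter.mpr ⟨hbS, h⟩)
      obtain ⟨A, B, hA, hB, hAB, hIb, hfb⟩ := hf b hPb
      rw [hfb, Finset.mem_powersetCard]
      refine ⟨?_, Finset.card_pair hAB⟩
      have hbmem : b ∈ A ∩ B := hIb ▸ Finset.mem_singleton_self b
      intro X hX
      have hmem : X ∈ 𝒜 ∧ b ∈ X := by
        simp only [Finset.mem_insert, Finset.mem_singleton] at hX
        rcases hX with rfl | rfl
        · exact ⟨hA, (Finset.mem_inter.mp hbmem).1⟩
        · exact ⟨hB, (Finset.mem_inter.mp hbmem).2⟩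
      rw [Finset.mem_sdiff]
      refine ⟨hmem.1, ?_⟩
      intro hXD
      obtain ⟨c, hc, hXc⟩ := Finset.mem_image.mp hXD
      have : b = c := Finset.mem_singleton.mp (hXc ▸ hmem.2)
      exact hbD (this ▸ hc)
    have hinj : Set.InjOn f ↑(S \ D) := by
      intro b hb c hc hbc
      have hPb : P b := by
        have := Finset.mem_sdiff.mp (Finset.mem_coe.mp hb)
        by_contra h; exact this.2 (Finset.mem_filter.mpr ⟨this.1, h⟩)
      have hPc : P c := by
        have := Finset.mem_sdiff.mp (Finset.mem_coe.mp hc)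
        by_contra h; exact this.2 (Finset.mem_filter.mpr ⟨this.1, h⟩)
      exact pairinj b c hPb hPc hbc
    have hle := Finset.card_le_card_of_injOn f hmaps hinj
    rw [Finset.card_sdiff_of_subset hDsub, Finset.card_powersetCard,
      Finset.card_sdiff_of_subset h𝒜Dsub, hcard𝒜D, hcard, hS] at hle
    have hd1 : 1 ≤ D.card := Finset.card_pos.mpr ⟨a0, ha0⟩
    have hdk : D.card ≤ k + 1 := by
      calc D.card = 𝒜D.card := hcard𝒜D.symm
        _ ≤ 𝒜.card := Finset.card_le_card h𝒜Dsub
        _ = k + 1 := hcard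
    exact stmt_15_arith k (k + 1 - D.card) D.card hk hd1 (by omega) (by omega)
  have hPall : ∀ b ∈ S, P b := by
    intro b hb
    by_contra h
    have : b ∈ D := Finset.mem_filter.mpr ⟨hb, h⟩
    rw [hD0] at this
    exact absurd this (Finset.notMem_empty b)
  -- f maps S into powersetCard 2 𝒜, injectively; equal cards ⇒ image equality
  have hmaps2 : ∀ b ∈ S, f b ∈ 𝒜.powersetCard 2 := by
    intro b hb
    obtain ⟨A, B, hA, hB, hAB, hIb, hfb⟩ := hf b (hPall b hb)
    rw [hfb, Finset.mem_powersetCard]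
    refine ⟨?_, Finset.card_pair hAB⟩
    intro X hX
    simp only [Finset.mem_insert, Finset.mem_singleton] at hX
    rcases hX with rfl | rfl
    · exact hA
    · exact hB
  have hinj2 : Set.InjOn f S := fun b hb c hc hbc =>
    pairinj b c (hPall b hb) (hPall c hc) hbc
  have himsub : S.image f ⊆ 𝒜.powersetCard 2 := by
    intro X hX
    obtain ⟨b, hb, rfl⟩ := Finset.mem_image.mp hX
    exact hmaps2 b hb
  have hcards : (𝒜.powersetCard 2).card ≤ (S.image f).card := by
    rw [Finset.card_image_of_injOn hinj2, Finset.card_powersetCard, hcard, hS,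
      Nat.choose_two_right, Nat.succ_sub_one, Nat.mul_comm]
  have himage : S.image f = 𝒜.powersetCard 2 :=
    Finset.eq_of_subset_of_card_le himsub hcards
  intro A hA B hB hAB
  have hpair : ({A, B} : Finset (Finset α)) ∈ 𝒜.powersetCard 2 := by
    rw [Finset.mem_powersetCard]
    refine ⟨?_, Finset.card_pair hAB⟩
    intro X hX
    simp only [Finset.mem_insert, Finset.mem_singleton] at hX
    rcases hX with rfl | rfl
    · exact hA
    · exact hB
  rw [← himage] at hpair
  obtain ⟨a, haS, hfa⟩ := Finset.mem_image.mp hpair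
  obtain ⟨C, Dd, hC, hD, hCD, hI, hfb⟩ := hf a (hPall a haS)
  rw [hfb] at hfa
  have : A ∩ B = C ∩ Dd := (pairs_eq C Dd A B hCD hfa).symm
  rw [this, hI, Finset.card_singleton]
end

section
/- Let k ≥ 3, let S be a finite set with |S| = α(k) = k(k+1)/2, and let 𝒜 be an HCSP-system on S with |𝒜| = k + 1. Then |A| = k for every A ∈ 𝒜. -/
open Finset

private lemma pair_cases16 {X : Type*} [DecidableEq X] {A B C D : X}
    (h : ({A, B} : Finset X) = {C, D}) : (A = C ∧ B = D) ∨ (A = D ∧ B = C) := by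
  have hA : A = C ∨ A = D := by
    have : A ∈ ({C, D} : Finset X) := h ▸ by simp
    simpa using this
  have hD : D = A ∨ D = B := by
    have : D ∈ ({A, B} : Finset X) := h.symm ▸ by simp
    simpa using this
  have hC : C = A ∨ C = B := by
    have : C ∈ ({A, B} : Finset X) := h.symm ▸ by simp
    simpa using this
  have hB : B = C ∨ B = D := by
    have : B ∈ ({C, D} : Finset X) := h ▸ by simp
    simpa using this
  rcases hA with rfl | rfl
  · rcases hD with rfl | rfl
    · rcases hB with rfl | rfl <;> tauto
    · tauto
  · rcases hC with rfl | rfl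
    · rcases hB with rfl | rfl <;> tauto
    · tauto

private lemma inter_eq_of_pair_eq16 {X : Type*} [DecidableEq X] {A B C D : Finset X}
    (h : ({A, B} : Finset (Finset X)) = {C, D}) : A ∩ B = C ∩ D := by
  rcases pair_cases16 h with ⟨rfl, rfl⟩ | ⟨rfl, rfl⟩
  · rfl
  · exact Finset.inter_comm _ _

theorem stmt_16 {α : Type*} [DecidableEq α] (k : ℕ) (hk : 3 ≤ k)
    (S : Finset α) (hS : S.card = k * (k + 1) / 2)
    (𝒜 : Finset (Finset α)) (hsub : ∀ A ∈ 𝒜, A ⊆ S)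
    (hcsp : ∀ a ∈ S, ∃ A ∈ 𝒜, ∃ B ∈ 𝒜, A ∩ B = {a})
    (hcard : 𝒜.card = k + 1) :
    ∀ A ∈ 𝒜, A.card = k := by
  classical
  have hNN : k * (k + 1) / 2 * 2 = k * (k + 1) :=
    Nat.div_mul_cancel (Nat.even_mul_succ_self k).two_dvd
  -- choose certificate pairs
  have hex : ∀ a : α, ∃ p : Finset α × Finset α,
      a ∈ S → p.1 ∈ 𝒜 ∧ p.2 ∈ 𝒜 ∧ p.1 ∩ p.2 = {a} := by
    intro a
    by_cases ha : a ∈ S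
    · obtain ⟨A, hA, B, hB, hAB⟩ := hcsp a ha
      exact ⟨(A, B), fun _ => ⟨hA, hB, hAB⟩⟩
    · exact ⟨(∅, ∅), fun h => absurd h ha⟩
  choose f hf using hex
  have hf1 : ∀ a ∈ S, (f a).1 ∈ 𝒜 := fun a ha => (hf a ha).1
  have hf2 : ∀ a ∈ S, (f a).2 ∈ 𝒜 := fun a ha => (hf a ha).2.1
  have hfi : ∀ a ∈ S, (f a).1 ∩ (f a).2 = {a} := fun a ha => (hf a ha).2.2
  have hmem1 : ∀ a ∈ S, a ∈ (f a).1 := by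
    intro a ha
    have : a ∈ (f a).1 ∩ (f a).2 := by rw [hfi a ha]; simp
    exact (Finset.mem_inter.1 this).1
  have hmem2 : ∀ a ∈ S, a ∈ (f a).2 := by
    intro a ha
    have : a ∈ (f a).1 ∩ (f a).2 := by rw [hfi a ha]; simp
    exact (Finset.mem_inter.1 this).2
  set pairF : α → Finset (Finset α) := fun a => {(f a).1, (f a).2} with hpairF
  have hinj : Set.InjOn pairF S := by
    intro a ha b hb hab
    have h1 : (f a).1 ∩ (f a).2 = (f b).1 ∩ (f b).2 := inter_eq_of_pair_eq16 hab
    rw [hfi a ha, hfi b hb] at h1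
    exact Finset.singleton_injective h1
  -- Step 1 : every set in 𝒜 has at least 2 elements
  have h2card : ∀ A ∈ 𝒜, 2 ≤ A.card := by
    by_contra hcon
    push_neg at hcon
    obtain ⟨A₀, hA₀, hA₀c⟩ := hcon
    set B1 := 𝒜.filter (fun A => A.card ≤ 1) with hB1
    have hm1 : 1 ≤ B1.card := by
      have : A₀ ∈ B1 := Finset.mem_filter.2 ⟨hA₀, by omega⟩
      exact Finset.card_pos.2 ⟨A₀, this⟩
    set 𝒜₂ := 𝒜.filter (fun A => ¬ A.card ≤ 1) with h𝒜₂
    have hsplit : B1.card + 𝒜₂.card = k + 1 := by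
      rw [← hcard]; exact Finset.card_filter_add_card_filter_not _
    set S₂ := S.filter (fun a => (f a).1.card ≤ 1 ∨ (f a).2.card ≤ 1) with hS₂
    set S₁ := S.filter (fun a => ¬ ((f a).1.card ≤ 1 ∨ (f a).2.card ≤ 1)) with hS₁
    have hSsplit : S₂.card + S₁.card = S.card :=
      Finset.card_filter_add_card_filter_not _
    -- small certificate sets are {a}
    have hS₂le : S₂.card ≤ B1.card := by
      apply Finset.card_le_card_of_injOn
        (fun a => if (f a).1.card ≤ 1 then (f a).1 else (f a).2)
      · intro a ha
        obtain ⟨haS, hsmall⟩ := Finset.mem_filter.1 ha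
        by_cases h1 : (f a).1.card ≤ 1
        · simp only [h1, if_true]
          exact Finset.mem_filter.2 ⟨hf1 a haS, h1⟩
        · simp only [h1, if_false]
          exact Finset.mem_filter.2 ⟨hf2 a haS, hsmall.resolve_left h1⟩
      · intro a ha b hb hab
        obtain ⟨haS, hsa⟩ := Finset.mem_filter.1 ha
        obtain ⟨hbS, hsb⟩ := Finset.mem_filter.1 hb
        have key : ∀ c ∈ S₂, (if (f c).1.card ≤ 1 then (f c).1 else (f c).2) = {c} := by
          intro c hc
          obtain ⟨hcS, hsc⟩ := Finset.mem_filter.1 hc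
          by_cases h1 : (f c).1.card ≤ 1
          · simp only [h1, if_true]
            have hmem := hmem1 c hcS
            have : (f c).1.card = 1 := le_antisymm h1 (Finset.card_pos.2 ⟨c, hmem⟩)
            obtain ⟨x, hx⟩ := Finset.card_eq_one.1 this
            rw [hx] at hmem ⊢
            simp_all
          · simp only [h1, if_false]
            have hmem := hmem2 c hcS
            have : (f c).2.card = 1 :=
              le_antisymm (hsc.resolve_left h1) (Finset.card_pos.2 ⟨c, hmem⟩)
            obtain ⟨x, hx⟩ := Finset.card_eq_one.1 this
            rw [hx] at hmem ⊢
            simp_all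
        have := (key a ha).symm.trans (hab.trans (key b hb))
        exact Finset.singleton_injective this
    -- big certificate pairs are distinct pairs among 𝒜₂
    have hS₁le : S₁.card ≤ (𝒜₂.powersetCard 2).card := by
      apply Finset.card_le_card_of_injOn pairF
      · intro a ha
        obtain ⟨haS, hbig⟩ := Finset.mem_filter.1 ha
        push_neg at hbig
        have hne : (f a).1 ≠ (f a).2 := by
          intro he
          have : (f a).1 ∩ (f a).2 = (f a).1 := by rw [← he]; simp
          rw [hfi a haS] at this
          have := congrArg Finset.card this
          simp at this
          omega
        apply Finset.mem_powersetCard.2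
        constructor
        · intro X hX
          simp only [hpairF, Finset.mem_insert, Finset.mem_singleton] at hX
          rcases hX with rfl | rfl
          · exact Finset.mem_filter.2 ⟨hf1 a haS, by omega⟩
          · exact Finset.mem_filter.2 ⟨hf2 a haS, by omega⟩
        · exact Finset.card_pair hne
      · intro a ha b hb hab
        exact hinj (Finset.mem_filter.1 ha).1 (Finset.mem_filter.1 hb).1 hab
    rw [Finset.card_powersetCard] at hS₁le
    -- arithmetic contradiction
    set m := B1.card
    set n := 𝒜₂.card
    have hch : n.choose 2 = n * (n - 1) / 2 := Nat.choose_two_right n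
    have hch2 : n * (n - 1) / 2 * 2 = n * (n - 1) := by
      rcases n with _ | n'
      · simp
      · simpa [Nat.succ_sub_one, mul_comm] using
          Nat.div_mul_cancel (Nat.even_mul_succ_self n').two_dvd
    rw [hch] at hS₁le
    have hineq : k * (k + 1) ≤ n * (n - 1) + 2 * m := by
      have h1 : S.card ≤ n * (n - 1) / 2 + m := by omega
      rw [hS] at h1
      omega
    have hnm : n + m = k + 1 := by omega
    have hnk : n ≤ k := by omega
    nlinarith [Nat.sub_le n 1, Nat.mul_le_mul hnk (Nat.sub_le n 1),
      Nat.mul_le_mul_left n (Nat.sub_le n 1)]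
  -- consequently certificate pairs are genuine pairs
  have hne : ∀ a ∈ S, (f a).1 ≠ (f a).2 := by
    intro a ha he
    have : (f a).1 ∩ (f a).2 = (f a).1 := by rw [← he]; simp
    rw [hfi a ha] at this
    have h2 := h2card _ (hf1 a ha)
    rw [← this] at h2
    simp at h2
  have hpmem : ∀ a ∈ S, pairF a ∈ 𝒜.powersetCard 2 := by
    intro a ha
    apply Finset.mem_powersetCard.2
    refine ⟨?_, Finset.card_pair (hne a ha)⟩
    intro X hX
    simp only [hpairF, Finset.mem_insert, Finset.mem_singleton] at hX
    rcases hX with rfl | rfl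
    · exact hf1 a ha
    · exact hf2 a ha
  -- the map a ↦ pairF a is a bijection onto pairs
  have himg : S.image pairF = 𝒜.powersetCard 2 := by
    apply Finset.eq_of_subset_of_card_le
    · intro p hp
      obtain ⟨a, ha, rfl⟩ := Finset.mem_image.1 hp
      exact hpmem a ha
    · rw [Finset.card_powersetCard, hcard, Finset.card_image_of_injOn hinj, hS,
        Nat.choose_two_right]
      simp [Nat.mul_comm]
  have hsurj : ∀ A ∈ 𝒜, ∀ B ∈ 𝒜, A ≠ B →
      ∃ a ∈ S, pairF a = {A, B} ∧ A ∩ B = {a} := by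
    intro A hA B hB hAB
    have hp : ({A, B} : Finset (Finset α)) ∈ 𝒜.powersetCard 2 := by
      apply Finset.mem_powersetCard.2
      refine ⟨?_, Finset.card_pair hAB⟩
      intro X hX
      simp only [Finset.mem_insert, Finset.mem_singleton] at hX
      rcases hX with rfl | rfl <;> assumption
    rw [← himg] at hp
    obtain ⟨a, ha, hpa⟩ := Finset.mem_image.1 hp
    refine ⟨a, ha, hpa, ?_⟩
    have := inter_eq_of_pair_eq16 hpa
    rw [← this, hfi a ha]
  -- lower bound : every A ∈ 𝒜 has at least k elements
  obtain ⟨a₀, ha₀⟩ : S.Nonempty := by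
    rw [← Finset.card_pos, hS]
    have h12 : 12 ≤ k * (k + 1) := by nlinarith
    omega
  have hex2 : ∀ A B : Finset α, ∃ b : α,
      A ∈ 𝒜 → B ∈ 𝒜 → A ≠ B → b ∈ S ∧ pairF b = {A, B} ∧ A ∩ B = {b} := by
    intro A B
    by_cases h : A ∈ 𝒜 ∧ B ∈ 𝒜 ∧ A ≠ B
    · obtain ⟨b, hb, h1, h2⟩ := hsurj A h.1 B h.2.1 h.2.2
      exact ⟨b, fun _ _ _ => ⟨hb, h1, h2⟩⟩
    · exact ⟨a₀, fun h1 h2 h3 => absurd ⟨h1, h2, h3⟩ h⟩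
  choose e he using hex2
  have hlow : ∀ A ∈ 𝒜, k ≤ A.card := by
    intro A hA
    have hcae : (𝒜.erase A).card = k := by
      rw [Finset.card_erase_of_mem hA, hcard]
      omega
    rw [← hcae]
    apply Finset.card_le_card_of_injOn (fun B => e A B)
    · intro B hB
      have hBA := Finset.ne_of_mem_erase hB
      obtain ⟨_, _, hint⟩ := he A B hA (Finset.mem_of_mem_erase hB) (Ne.symm hBA)
      have : e A B ∈ A ∩ B := by rw [hint]; simp
      exact (Finset.mem_inter.1 this).1
    · intro B hB C hC hBC
      have hBA := Finset.ne_of_mem_erase hB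
      have hCA := Finset.ne_of_mem_erase hC
      obtain ⟨_, hpB, _⟩ := he A B hA (Finset.mem_of_mem_erase hB) (Ne.symm hBA)
      obtain ⟨_, hpC, _⟩ := he A C hA (Finset.mem_of_mem_erase hC) (Ne.symm hCA)
      have hBC' : e A B = e A C := hBC
      have : ({A, B} : Finset (Finset α)) = {A, C} := by rw [← hpB, hBC', hpC]
      rcases pair_cases16 this with ⟨_, h2⟩ | ⟨h1, _⟩
      · exact h2
      · exact absurd h1.symm hCA
  -- degree bound : each a ∈ S lies in at most 2 members of 𝒜
  have hdeg : ∀ a ∈ S, (𝒜.filter (fun A => a ∈ A)).card ≤ 2 := by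
    intro a ha
    have hsub2 : 𝒜.filter (fun A => a ∈ A) ⊆ {(f a).1, (f a).2} := by
      intro C hC
      obtain ⟨hC𝒜, haC⟩ := Finset.mem_filter.1 hC
      by_contra hCn
      simp only [Finset.mem_insert, Finset.mem_singleton] at hCn
      push_neg at hCn
      obtain ⟨hC1, hC2⟩ := hCn
      obtain ⟨b, hbS, hpb, hint⟩ := hsurj _ (hf1 a ha) C hC𝒜 (Ne.symm hC1)
      have hab : a = b := by
        have : a ∈ (f a).1 ∩ C := Finset.mem_inter.2 ⟨hmem1 a ha, haC⟩
        rw [hint] at this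
        simpa using this
      subst hab
      have : ({(f a).1, (f a).2} : Finset (Finset α)) = {(f a).1, C} := hpb
      rcases pair_cases16 this with ⟨_, h2⟩ | ⟨h1, _⟩
      · exact hC2 h2.symm
      · exact hC1 h1.symm
    calc (𝒜.filter (fun A => a ∈ A)).card ≤ ({(f a).1, (f a).2} : Finset (Finset α)).card :=
          Finset.card_le_card hsub2
      _ ≤ 2 := Finset.card_insert_le _ _ |>.trans (by simp)
  -- double counting
  have hsum : ∑ A ∈ 𝒜, A.card = ∑ a ∈ S, (𝒜.filter (fun A => a ∈ A)).card := by
    have h1 : ∀ A ∈ 𝒜, A.card = ∑ a ∈ S, if a ∈ A then 1 else 0 := by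
      intro A hA
      rw [← Finset.card_filter]
      congr 1
      ext x
      simp only [Finset.mem_filter]
      exact ⟨fun h => ⟨hsub A hA h, h⟩, fun h => h.2⟩
    rw [Finset.sum_congr rfl h1, Finset.sum_comm]
    exact Finset.sum_congr rfl fun a _ => (Finset.card_filter _ _).symm
  have hup : ∑ A ∈ 𝒜, A.card ≤ k * (k + 1) := by
    calc ∑ A ∈ 𝒜, A.card = ∑ a ∈ S, (𝒜.filter (fun A => a ∈ A)).card := hsum
      _ ≤ ∑ a ∈ S, 2 := Finset.sum_le_sum hdeg
      _ = S.card * 2 := by rw [Finset.sum_const, smul_eq_mul]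
      _ = k * (k + 1) := by rw [hS]; omega
  -- conclusion
  intro A hA
  by_contra hAk
  have hAgt : k + 1 ≤ A.card := by
    have := hlow A hA
    omega
  have hrest : k * k ≤ ∑ B ∈ 𝒜.erase A, B.card := by
    have : (𝒜.erase A).card * k ≤ ∑ B ∈ 𝒜.erase A, B.card := by
      apply Finset.card_nsmul_le_sum
      intro B hB
      exact hlow B (Finset.mem_of_mem_erase hB)
    rwa [Finset.card_erase_of_mem hA, hcard, Nat.add_sub_cancel] at this
  have htot : A.card + ∑ B ∈ 𝒜.erase A, B.card = ∑ B ∈ 𝒜, B.card :=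
    Finset.add_sum_erase 𝒜 Finset.card hA
  nlinarith
end

section
/- Let k ≥ 3 and let 𝒜 = {A₁, …, A_{k+1}} be an HCSP-system on a set S of size α(k) = k(k+1)/2. Extend S to S⁺ = S ∪ {b₁, …, b_{k+1}} by k+1 new elements, set Aᵢ⁺ = Aᵢ ∪ {bᵢ} for 1 ≤ i ≤ k+1 and A_{k+2}⁺ = {b₁, …, b_{k+1}}. Then 𝒜⁺ = {A₁⁺, …, A_{k+2}⁺} is an HCSP-system on S⁺ with |𝒜⁺| = k + 2 and |S⁺| = α(k+1). -/
open Finset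

theorem key_sep {α : Type*} [DecidableEq α] (k : ℕ) (hk : 3 ≤ k)
    (S : Finset α) (hS : S.card = k * (k + 1) / 2)
    (A : Fin (k + 1) → Finset α) (hsub : ∀ i, A i ⊆ S)
    (hcsp : ∀ a ∈ S, ∃ i j, A i ∩ A j = {a}) :
    ∀ a ∈ S, ∃ i j, i ≠ j ∧ A i ∩ A j = {a} := by
  classical
  set Bad := S.filter (fun a => ¬ ∃ i j, i ≠ j ∧ A i ∩ A j = {a}) with hBadDef
  suffices hB : Bad = ∅ by
    intro a ha
    by_contra h
    have : a ∈ Bad := mem_filter.mpr ⟨ha, h⟩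
    rw [hB] at this; simp at this
  by_contra hBne
  have hm1 : 1 ≤ Bad.card := card_pos.mpr (nonempty_iff_ne_empty.mpr hBne)
  have hbadex : ∀ a ∈ Bad, ∃ i, A i = {a} := by
    intro a ha
    obtain ⟨haS, hnot⟩ := mem_filter.mp ha
    obtain ⟨i, j, hij⟩ := hcsp a haS
    rcases eq_or_ne i j with rfl | hne
    · exact ⟨i, by simpa using hij⟩
    · exact absurd ⟨i, j, hne, hij⟩ hnot
  choose! idx hidx using hbadex
  have hidxinj : Set.InjOn idx Bad := by
    intro a ha a' ha' h
    rw [mem_coe] at ha ha'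
    have h1 := hidx a ha
    have h2 := hidx a' ha'
    rw [h] at h1
    rw [h1] at h2
    exact Finset.singleton_inj.mp h2
  have hmcard : (Bad.image idx).card = Bad.card := card_image_of_injOn hidxinj
  set m := Bad.card with hm
  have hmk : m ≤ k + 1 := by
    have := card_le_univ (Bad.image idx)
    simp only [hmcard, card_univ, Fintype.card_fin] at this
    omega
  have hgoodex : ∀ a ∈ S \ Bad, ∃ i j, i ≠ j ∧ A i ∩ A j = {a} := by
    intro a ha
    obtain ⟨haS, hnb⟩ := mem_sdiff.mp ha
    by_contra h
    exact hnb (mem_filter.mpr ⟨haS, h⟩)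
  choose! f g hfg hA using hgoodex
  have hφmem : ∀ a ∈ S \ Bad,
      ({f a, g a} : Finset (Fin (k+1))) ∈ (univ \ Bad.image idx).powersetCard 2 := by
    intro a ha
    have hane : a ∉ Bad := (mem_sdiff.mp ha).2
    have havoid : ∀ i ∈ ({f a, g a} : Finset (Fin (k+1))), i ∉ Bad.image idx := by
      intro i hi hmem
      obtain ⟨a', ha', heq⟩ := mem_image.mp hmem
      have hAi : A (idx a') = {a'} := hidx a' ha'
      have haIn : a ∈ A (f a) ∩ A (g a) := by rw [hA a ha]; exact mem_singleton_self a
      have hmemA : a ∈ A i := by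
        rcases mem_insert.mp hi with h' | h'
        · rw [h']; exact (mem_inter.mp haIn).1
        · rw [mem_singleton.mp h']; exact (mem_inter.mp haIn).2
      rw [← heq, hAi, mem_singleton] at hmemA
      rw [← hmemA] at ha'
      exact hane ha'
    refine mem_powersetCard.mpr ⟨fun i hi => mem_sdiff.mpr ⟨mem_univ i, havoid i hi⟩, ?_⟩
    rw [card_insert_of_notMem (by simp [hfg a ha]), card_singleton]
  have hφinj : Set.InjOn (fun a => ({f a, g a} : Finset (Fin (k+1)))) ↑(S \ Bad) := by
    intro a ha a' ha' h
    rw [mem_coe] at ha ha'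
    simp only at h
    have hint : A (f a) ∩ A (g a) = A (f a') ∩ A (g a') := by
      have h1 : f a' ∈ ({f a, g a} : Finset (Fin (k+1))) := by rw [h]; simp
      have h2 : g a' ∈ ({f a, g a} : Finset (Fin (k+1))) := by rw [h]; simp
      simp only [mem_insert, mem_singleton] at h1 h2
      rcases h1 with h1 | h1 <;> rcases h2 with h2 | h2
      · exact absurd (h1.trans h2.symm) (hfg a' ha')
      · rw [← h1, ← h2]
      · rw [← h1, ← h2]; exact Finset.inter_comm _ _
      · exact absurd (h1.trans h2.symm) (hfg a' ha')
    exact Finset.singleton_inj.mp ((hA a ha).symm.trans (hint.trans (hA a' ha')))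
  have hGood : (S \ Bad).card ≤ ((univ \ Bad.image idx).powersetCard 2).card :=
    card_le_card_of_injOn _ hφmem hφinj
  have hBadsub : Bad ⊆ S := filter_subset _ _
  have hGcard : (S \ Bad).card = S.card - m := card_sdiff_of_subset hBadsub
  have hucard : (univ \ Bad.image idx).card = (k + 1) - m := by
    rw [card_sdiff_of_subset (subset_univ _), hmcard, card_univ]
    simp
  have hPcard : ((univ \ Bad.image idx).powersetCard 2).card = ((k+1) - m).choose 2 := by
    rw [card_powersetCard, hucard]
  rw [hGcard, hPcard] at hGood
  obtain ⟨n, rfl⟩ : ∃ n, k = n + 3 := ⟨k - 3, by omega⟩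
  rw [show n+3+1 = n+4 from rfl] at hGood hS hmk
  have hchoose_le : ((n+4) - m).choose 2 ≤ (n+3).choose 2 := Nat.choose_le_choose 2 (by omega)
  have hk2 : (n+3).choose 2 = (n+3) * (n+2) / 2 := by
    rw [Nat.choose_two_right, show n+3-1 = n+2 from rfl]
  have hPQ : (n+3) * (n+4) = (n+3) * (n+2) + 2 * (n+3) := by ring
  have hP2 : (n+3) * (n+4) % 2 = 0 := by
    have := Nat.even_mul_succ_self (n+3)
    rw [show n+3+1 = n+4 from rfl] at this
    exact Nat.even_iff.mp this
  have hstep : (n+3) * (n+4) / 2 - m ≤ (n+3) * (n+2) / 2 := by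
    rw [hS] at hGood
    exact hGood.trans (hchoose_le.trans_eq hk2)
  have hmgek : n + 3 ≤ m := by omega
  have hz : ((n+4) - m).choose 2 = 0 := Nat.choose_eq_zero_of_lt (by omega)
  rw [hS, hz] at hGood
  have hbig : 2 * (n+4) + 1 < (n+3) * (n+4) := by nlinarith
  omega

theorem stmt_17 {α : Type*} [DecidableEq α] (k : ℕ) (hk : 3 ≤ k)
    (S : Finset α) (hS : S.card = k * (k + 1) / 2)
    (A : Fin (k + 1) → Finset α) (hsub : ∀ i, A i ⊆ S)
    (hcsp : ∀ a ∈ S, ∃ i j, A i ∩ A j = {a})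
    (hcard : (Finset.univ.image A).card = k + 1)
    (b : Fin (k + 1) → α) (hb : Function.Injective b) (hbS : ∀ i, b i ∉ S) :
    (∀ a ∈ S ∪ Finset.univ.image b,
        ∃ P ∈ (Finset.univ.image fun i => A i ∪ {b i}) ∪ {Finset.univ.image b},
        ∃ Q ∈ (Finset.univ.image fun i => A i ∪ {b i}) ∪ {Finset.univ.image b},
          P ∩ Q = {a}) ∧
    ((Finset.univ.image fun i => A i ∪ {b i}) ∪ {Finset.univ.image b}).card = k + 2 ∧
    (S ∪ Finset.univ.image b).card = (k + 1) * (k + 2) / 2 := by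
  classical
  have key := key_sep k hk S hS A hsub hcsp
  have hbnotA : ∀ i j : Fin (k+1), b i ∉ A j := fun i j h => hbS i (hsub j h)
  refine ⟨?_, ?_, ?_⟩
  · intro a ha
    rcases mem_union.mp ha with haS | hab
    · obtain ⟨i, j, hne, hij⟩ := key a haS
      refine ⟨A i ∪ {b i}, mem_union_left _ (mem_image.mpr ⟨i, mem_univ i, rfl⟩),
        A j ∪ {b j}, mem_union_left _ (mem_image.mpr ⟨j, mem_univ j, rfl⟩), ?_⟩
      have : (A i ∪ {b i}) ∩ (A j ∪ {b j}) = A i ∩ A j := by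
        ext x
        simp only [mem_inter, mem_union, mem_singleton]
        constructor
        · rintro ⟨hx1 | hx1, hx2 | hx2⟩
          · exact ⟨hx1, hx2⟩
          · exact absurd (hx2 ▸ hx1) (hbnotA j i)
          · exact absurd (hx1 ▸ hx2) (hbnotA i j)
          · exact absurd (hb (hx1.symm.trans hx2 : b i = b j)) hne
        · rintro ⟨hx1, hx2⟩
          exact ⟨Or.inl hx1, Or.inl hx2⟩
      rw [this, hij]
    · obtain ⟨i, -, rfl⟩ := mem_image.mp hab
      refine ⟨A i ∪ {b i}, mem_union_left _ (mem_image.mpr ⟨i, mem_univ i, rfl⟩),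
        Finset.univ.image b, mem_union_right _ (mem_singleton_self _), ?_⟩
      ext x
      simp only [mem_inter, mem_union, mem_singleton, mem_image, mem_univ, true_and]
      constructor
      · rintro ⟨hx1 | hx1, j, rfl⟩
        · exact absurd hx1 (hbnotA j i)
        · exact hx1
      · rintro rfl
        exact ⟨Or.inr rfl, i, rfl⟩
  · have hinj : Function.Injective (fun i => A i ∪ {b i}) := by
      intro i j h
      simp only at h
      have : b i ∈ A j ∪ {b j} := by rw [← h]; simp
      rcases mem_union.mp this with h' | h'
      · exact absurd h' (hbnotA i j)
      · exact hb (mem_singleton.mp h')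
    have hnotmem : Finset.univ.image b ∉ Finset.univ.image (fun i => A i ∪ {b i}) := by
      intro hmem
      obtain ⟨i, -, hi⟩ := mem_image.mp hmem
      -- pick j ≠ i
      have h2 : 2 ≤ k + 1 := by omega
      obtain ⟨j, hji⟩ : ∃ j : Fin (k+1), j ≠ i := by
        rcases eq_or_ne i 0 with rfl | h0
        · exact ⟨1, by simp [Fin.ext_iff]; omega⟩
        · exact ⟨0, Ne.symm h0⟩
      have : b j ∈ A i ∪ {b i} := by rw [hi]; exact mem_image.mpr ⟨j, mem_univ j, rfl⟩
      rcases mem_union.mp this with h' | h'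
      · exact absurd h' (hbnotA j i)
      · exact hji (hb (mem_singleton.mp h'))
    rw [Finset.union_comm, ← Finset.insert_eq, card_insert_of_notMem hnotmem,
      card_image_of_injective _ hinj, card_univ, Fintype.card_fin]
  · have hdisj : Disjoint S (Finset.univ.image b) := by
      rw [Finset.disjoint_right]
      intro x hx
      obtain ⟨i, -, rfl⟩ := mem_image.mp hx
      exact hbS i
    rw [card_union_of_disjoint hdisj, hS, card_image_of_injective _ hb, card_univ,
      Fintype.card_fin]
    have h1 : (k+1) * (k+2) = k * (k+1) + 2 * (k+1) := by ring
    have h2 : k * (k+1) % 2 = 0 := Nat.even_iff.mp (Nat.even_mul_succ_self k)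
    omega
end

section
/- Let S be a finite set with |S| = s ≥ 3. Then there exists an HCSP-system 𝒜 on S with |𝒜| = ⌈(1 + √(8s+1))/2⌉; consequently, an HCSP-system on S is size-minimal if and only if it has exactly ⌈(1 + √(8s+1))/2⌉ members. -/
private def Tf (j : ℕ) : ℕ := j * (j - 1) / 2

private lemma Tf_succ (j : ℕ) : Tf (j + 1) = Tf j + j := by
  rcases j with _ | k
  · rfl
  · show (k + 1 + 1) * (k + 1 + 1 - 1) / 2 = (k + 1) * (k + 1 - 1) / 2 + (k + 1)
    have h : (k + 1 + 1) * (k + 1 + 1 - 1) = (k + 1) * (k + 1 - 1) + (k + 1) * 2 := by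
      simp only [Nat.add_sub_cancel]; ring
    rw [h, Nat.add_mul_div_right _ _ (by norm_num : (0:ℕ) < 2)]

private lemma Tf_mono : Monotone Tf :=
  monotone_nat_of_le_succ fun j => by rw [Tf_succ]; omega

private lemma two_Tf (j : ℕ) : 2 * Tf j = j * (j - 1) := by
  apply Nat.mul_div_cancel'
  rcases j with _ | k
  · simp
  · simpa [Nat.mul_comm] using (Nat.even_mul_succ_self k).two_dvd

private lemma Tf_lt_exists (t : ℕ) : ∃ j, t < Tf (j + 1) := by
  refine ⟨t + 1, ?_⟩
  induction t with
  | zero => decide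
  | succ n ih =>
    have h1 := Tf_succ (n + 1 + 1); omega

private def Jf (t : ℕ) : ℕ := Nat.find (Tf_lt_exists t)
private def If (t : ℕ) : ℕ := t - Tf (Jf t)

private lemma Jf_spec (t : ℕ) : t < Tf (Jf t + 1) := Nat.find_spec (Tf_lt_exists t)

private lemma Tf_Jf_le (t : ℕ) : Tf (Jf t) ≤ t := by
  rcases h : Jf t with _ | j
  · simp [Tf]
  · by_contra hlt
    push_neg at hlt
    exact Nat.find_min (Tf_lt_exists t) (show j < Jf t by omega) hlt

private lemma If_lt_Jf (t : ℕ) : If t < Jf t := by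
  have h1 := Jf_spec t
  have h2 := Tf_Jf_le t
  have h3 := Tf_succ (Jf t)
  unfold If; omega

private lemma Jf_encode (t : ℕ) : Tf (Jf t) + If t = t := by
  unfold If; have := Tf_Jf_le t; omega

private lemma Jf_eq (i j : ℕ) (h : i < j) : Jf (Tf j + i) = j ∧ If (Tf j + i) = i := by
  set t := Tf j + i with ht
  have htlt : t < Tf (j + 1) := by rw [Tf_succ]; omega
  have hle : Jf t ≤ j := Nat.find_le htlt
  have hge : j ≤ Jf t := by
    by_contra hlt
    push_neg at hlt
    have hm : Tf (Jf t + 1) ≤ Tf j := Tf_mono (by omega)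
    have := Jf_spec t
    omega
  have hJ : Jf t = j := le_antisymm hle hge
  refine ⟨hJ, ?_⟩
  unfold If; rw [hJ]; omega

private lemma Jf_lt (t m : ℕ) (hm : 1 ≤ m) (h : t < Tf m) : Jf t < m := by
  have : Jf t ≤ m - 1 := Nat.find_le (by rwa [Nat.sub_add_cancel hm])
  omega

private lemma construction {α : Type*} [DecidableEq α] (S : Finset α) (m : ℕ)
    (hm3 : 3 ≤ m) (hlow : (m - 1) * (m - 2) < 2 * S.card)
    (hhigh : 2 * S.card ≤ m * (m - 1)) (hS : 3 ≤ S.card) :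
    ∃ 𝒜 : Finset (Finset α), (∀ A ∈ 𝒜, A ⊆ S) ∧
      (∀ a ∈ S, ∃ A ∈ 𝒜, ∃ B ∈ 𝒜, A ∩ B = {a}) ∧ 𝒜.card = m := by
  classical
  set s := S.card with hs
  have hsTm : s ≤ Tf m := by have := two_Tf m; omega
  have hTm1 : s > Tf (m - 1) := by
    have h2 := two_Tf (m - 1)
    have h3 : m - 1 - 1 = m - 2 := by omega
    rw [h3] at h2
    omega
  set e := S.equivFin with he
  set ia : α → ℕ := fun a => if h : a ∈ S then (e ⟨a, h⟩ : ℕ) else 0 with hia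
  have hia_lt : ∀ a ∈ S, ia a < s := by
    intro a ha; simp only [hia, dif_pos ha]; exact (e ⟨a, ha⟩).isLt
  have hia_inj : ∀ a ∈ S, ∀ b ∈ S, ia a = ia b → a = b := by
    intro a ha b hb h
    simp only [hia, dif_pos ha, dif_pos hb] at h
    have := e.injective (Fin.val_injective h)
    exact congrArg Subtype.val this
  have hia_surj : ∀ t < s, ∃ a ∈ S, ia a = t := by
    intro t ht
    refine ⟨(e.symm ⟨t, ht⟩ : α), (e.symm ⟨t, ht⟩).2, ?_⟩
    simp only [hia, dif_pos (e.symm ⟨t, ht⟩).2]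
    rw [show (⟨(e.symm ⟨t, ht⟩ : α), (e.symm ⟨t, ht⟩).2⟩ : {x // x ∈ S}) = e.symm ⟨t, ht⟩ from rfl,
      Equiv.apply_symm_apply]
  set A : ℕ → Finset α := fun i => S.filter (fun a => If (ia a) = i ∨ Jf (ia a) = i) with hA
  have hmemA : ∀ i, ∀ x, x ∈ A i ↔ x ∈ S ∧ (If (ia x) = i ∨ Jf (ia x) = i) := by
    intro i x; simp [hA]
  -- intersection characterization
  have hinter : ∀ i j, i < j → ∀ x, x ∈ A i ∩ A j ↔
      (x ∈ S ∧ If (ia x) = i ∧ Jf (ia x) = j) := by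
    intro i j hij x
    rw [Finset.mem_inter, hmemA, hmemA]
    constructor
    · rintro ⟨⟨hxS, h1⟩, ⟨_, h2⟩⟩
      have hIJ := If_lt_Jf (ia x)
      exact ⟨hxS, by omega, by omega⟩
    · rintro ⟨hxS, h1, h2⟩; exact ⟨⟨hxS, Or.inl h1⟩, ⟨hxS, Or.inr h2⟩⟩
  have hdeg2 : ∀ i, i + 2 ≤ m → ∃ x ∈ A i, ∃ y ∈ A i, x ≠ y := by
    intro i hi
    have key : ∃ t1 t2 : ℕ, t1 < s ∧ t2 < s ∧ t1 ≠ t2 ∧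
        (If t1 = i ∨ Jf t1 = i) ∧ (If t2 = i ∨ Jf t2 = i) := by
      have mkt : ∀ j, i ≠ j →
          If (Tf (max i j) + min i j) = min i j ∧ Jf (Tf (max i j) + min i j) = max i j := by
        intro j hij
        have h := Jf_eq (min i j) (max i j) (by omega)
        exact ⟨h.2, h.1⟩
      have mem : ∀ j, i ≠ j → (If (Tf (max i j) + min i j) = i ∨ Jf (Tf (max i j) + min i j) = i) := by
        intro j hij
        rcases (mkt j hij) with ⟨h1, h2⟩
        rcases le_total i j with h | h
        · left; omega
        · right; omega
      have tne : ∀ j1 j2, i ≠ j1 → i ≠ j2 → j1 ≠ j2 →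
          Tf (max i j1) + min i j1 ≠ Tf (max i j2) + min i j2 := by
        intro j1 j2 h1 h2 h12 heq
        have k1 := mkt j1 h1
        have k2 := mkt j2 h2
        rw [heq] at k1
        have hmin : min i j1 = min i j2 := by omega
        have hmax : max i j1 = max i j2 := by omega
        omega
      by_cases hm4 : 4 ≤ m
      · set j1 := if i = 0 then 1 else 0 with hj1
        set j2 := if i = 2 then 1 else 2 with hj2
        have hij1 : i ≠ j1 := by simp only [hj1]; split_ifs <;> omega
        have hij2 : i ≠ j2 := by simp only [hj2]; split_ifs <;> omega
        have hj12 : j1 ≠ j2 := by simp only [hj1, hj2]; split_ifs <;> omega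
        have hb : ∀ j, j ≤ m - 2 → i ≠ j → Tf (max i j) + min i j < s := by
          intro j hj hij
          have h1 : Tf (max i j) + min i j < Tf (max i j + 1) := by rw [Tf_succ]; omega
          have h2 : Tf (max i j + 1) ≤ Tf (m - 1) := Tf_mono (by omega)
          omega
        refine ⟨_, _, hb j1 (by simp only [hj1]; split_ifs <;> omega) hij1,
          hb j2 (by simp only [hj2]; split_ifs <;> omega) hij2,
          tne j1 j2 hij1 hij2 hj12, mem j1 hij1, mem j2 hij2⟩
      · have hm : m = 3 := by omega
        have hi1 : i ≤ 1 := by omega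
        have hTf2 : Tf 2 = 1 := by decide
        have h01 := Jf_eq 0 1 (by omega)
        have h2 := Jf_eq i 2 (by omega)
        refine ⟨0, Tf 2 + i, by omega, by omega, by omega, ?_, ?_⟩
        · have : Tf 1 + 0 = 0 := by decide
          rw [← this]
          rcases Nat.eq_or_lt_of_le hi1 with h | h
          · right; omega
          · left; omega
        · left; exact h2.2
    obtain ⟨t1, t2, ht1, ht2, hne, hp1, hp2⟩ := key
    obtain ⟨x, hxS, hx⟩ := hia_surj t1 ht1
    obtain ⟨y, hyS, hy⟩ := hia_surj t2 ht2
    refine ⟨x, (hmemA i x).2 ⟨hxS, by rw [hx]; exact hp1⟩,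
      y, (hmemA i y).2 ⟨hyS, by rw [hy]; exact hp2⟩, ?_⟩
    intro h; rw [h] at hx; omega
  -- injectivity
  have hAinj : ∀ i < m, ∀ j < m, A i = A j → i = j := by
    have key : ∀ i j, i < j → j < m → A i ≠ A j := by
      intro i j hij hjm heq
      obtain ⟨x, hx, y, hy, hxy⟩ := hdeg2 i (by omega)
      have hx2 : x ∈ A i ∩ A j := Finset.mem_inter.2 ⟨hx, heq ▸ hx⟩
      have hy2 : y ∈ A i ∩ A j := Finset.mem_inter.2 ⟨hy, heq ▸ hy⟩
      rw [hinter i j hij] at hx2 hy2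
      refine hxy (hia_inj x hx2.1 y hy2.1 ?_)
      obtain ⟨_, hxI, hxJ⟩ := hx2
      obtain ⟨_, hyI, hyJ⟩ := hy2
      have e1 := Jf_encode (ia x)
      have e2 := Jf_encode (ia y)
      rw [hxJ] at e1
      rw [hyJ] at e2
      omega
    intro i hi j hj heq
    rcases lt_trichotomy i j with h | h | h
    · exact absurd heq (key i j h hj)
    · exact h
    · exact absurd heq.symm (key j i h hi)
  refine ⟨(Finset.range m).image A, ?_, ?_, ?_⟩
  · intro X hX
    obtain ⟨i, _, rfl⟩ := Finset.mem_image.1 hX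
    exact Finset.filter_subset _ _
  · intro a ha
    set t := ia a with ht
    have htlt : t < s := hia_lt a ha
    have hJm : Jf t < m := Jf_lt t m (by omega) (by omega)
    have hIm : If t < m := lt_trans (If_lt_Jf t) hJm
    refine ⟨A (If t), Finset.mem_image.2 ⟨If t, Finset.mem_range.2 hIm, rfl⟩,
      A (Jf t), Finset.mem_image.2 ⟨Jf t, Finset.mem_range.2 hJm, rfl⟩, ?_⟩
    ext x
    rw [Finset.mem_singleton, hinter _ _ (If_lt_Jf t)]
    constructor
    · rintro ⟨hxS, h1, h2⟩
      apply hia_inj x hxS a ha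
      have e1 := Jf_encode (ia x)
      have e2 := Jf_encode t
      rw [h1, h2] at e1
      omega
    · rintro rfl
      exact ⟨ha, rfl, rfl⟩
  · rw [Finset.card_image_of_injOn, Finset.card_range]
    intro i hi j hj
    exact hAinj i (Finset.mem_range.1 hi) j (Finset.mem_range.1 hj)

private lemma arith_helper (k j : ℕ) (h3 : 3 ≤ k + j) :
    2 * k + j * (j - 1) ≤ (k + j) * (k + j - 1) := by
  rcases j with _ | j
  · obtain ⟨k', rfl⟩ : ∃ k', k = k' + 3 := ⟨k - 3, by omega⟩
    have h : k' + 3 + 0 - 1 = k' + 2 := by omega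
    rw [h]
    nlinarith
  · have h1 : k + (j + 1) - 1 = k + j := by omega
    rw [h1, Nat.add_sub_cancel]
    rcases k with _ | k
    · nlinarith
    · nlinarith

private lemma lowerbound {α : Type*} [DecidableEq α] (S : Finset α) (hS : 3 ≤ S.card)
    (ℬ : Finset (Finset α))
    (hsep : ∀ a ∈ S, ∃ A ∈ ℬ, ∃ B ∈ ℬ, A ∩ B = {a}) :
    3 ≤ ℬ.card ∧ 2 * S.card ≤ ℬ.card * (ℬ.card - 1) := by
  classical
  set T₁ := S.filter (fun a => ({a} : Finset α) ∈ ℬ) with hTT1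
  set T₂ := S.filter (fun a => ¬ (({a} : Finset α) ∈ ℬ)) with hTT2
  set ℬ₁ := ℬ.filter (fun B => B.card ≤ 1) with hBB1
  set ℬ₂ := ℬ.filter (fun B => ¬ (B.card ≤ 1)) with hBB2
  have hcard1 : T₁.card ≤ ℬ₁.card := by
    apply Finset.card_le_card_of_injOn (fun a => ({a} : Finset α))
    · intro a ha
      simp only [Finset.mem_coe, hTT1, Finset.mem_filter] at ha
      simp only [Finset.mem_coe, hBB1, Finset.mem_filter]
      exact ⟨ha.2, by simp⟩
    · intro a _ b _ h
      exact Finset.singleton_injective h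
  have hcard2 : T₂.card ≤ ℬ₂.card.choose 2 := by
    have hex : ∀ a : α, ∃ p : Finset (Finset α), a ∈ T₂ →
        p ∈ ℬ₂.powersetCard 2 ∧ ∃ A B, p = {A, B} ∧ A ∩ B = {a} := by
      intro a
      by_cases ha : a ∈ T₂
      swap
      · exact ⟨∅, fun h => absurd h ha⟩
      rw [hTT2, Finset.mem_filter] at ha
      obtain ⟨haS, hna⟩ := ha
      obtain ⟨A, hA, B, hB, hAB⟩ := hsep a haS
      have haAB : a ∈ A ∩ B := hAB ▸ Finset.mem_singleton_self a
      have haA : a ∈ A := (Finset.mem_inter.1 haAB).1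
      have haB : a ∈ B := (Finset.mem_inter.1 haAB).2
      have hA2 : ¬ A.card ≤ 1 := by
        intro h
        have : A = {a} := Finset.eq_singleton_iff_unique_mem.2
          ⟨haA, fun x hx => Finset.card_le_one.1 h x hx a haA⟩
        exact hna (this ▸ hA)
      have hB2 : ¬ B.card ≤ 1 := by
        intro h
        have : B = {a} := Finset.eq_singleton_iff_unique_mem.2
          ⟨haB, fun x hx => Finset.card_le_one.1 h x hx a haB⟩
        exact hna (this ▸ hB)
      have hABne : A ≠ B := by
        intro h
        rw [h, Finset.inter_self] at hAB
        exact hB2 (by rw [hAB]; simp)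
      refine ⟨{A, B}, fun _ => ⟨?_, A, B, rfl, hAB⟩⟩
      rw [Finset.mem_powersetCard]
      constructor
      · intro X hX
        rcases Finset.mem_insert.1 hX with rfl | hX
        · rw [hBB2, Finset.mem_filter]; exact ⟨hA, hA2⟩
        · rw [Finset.mem_singleton] at hX
          subst hX
          rw [hBB2, Finset.mem_filter]
          exact ⟨hB, hB2⟩
      · rw [Finset.card_insert_of_notMem (by simpa using hABne), Finset.card_singleton]
    choose f hf using hex
    have hle := Finset.card_le_card_of_injOn f (fun a ha => (hf a ha).1) ?_
    · rwa [Finset.card_powersetCard] at hle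
    intro a ha b hb h
    obtain ⟨A, B, hp, hAB⟩ := (hf a ha).2
    obtain ⟨A', B', hp', hAB'⟩ := (hf b hb).2
    have hpq : ({A, B} : Finset (Finset α)) = {A', B'} := by rw [← hp, ← hp', h]
    have haA : a ∈ A ∧ a ∈ B := Finset.mem_inter.1 (hAB ▸ Finset.mem_singleton_self a)
    have hA'm : A' ∈ ({A, B} : Finset (Finset α)) := by
      rw [hpq]; exact Finset.mem_insert_self _ _
    have hB'm : B' ∈ ({A, B} : Finset (Finset α)) := by
      rw [hpq]; exact Finset.mem_insert_of_mem (Finset.mem_singleton_self _)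
    have haA' : a ∈ A' := by
      rcases Finset.mem_insert.1 hA'm with rfl | h'
      · exact haA.1
      · rw [Finset.mem_singleton] at h'; subst h'; exact haA.2
    have haB' : a ∈ B' := by
      rcases Finset.mem_insert.1 hB'm with rfl | h'
      · exact haA.1
      · rw [Finset.mem_singleton] at h'; subst h'; exact haA.2
    have hfin : a ∈ A' ∩ B' := Finset.mem_inter.2 ⟨haA', haB'⟩
    rw [hAB', Finset.mem_singleton] at hfin
    exact hfin
  have hsplit : T₁.card + T₂.card = S.card := Finset.card_filter_add_card_filter_not _
  have hBsplit : ℬ₁.card + ℬ₂.card = ℬ.card := Finset.card_filter_add_card_filter_not _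
  set k := ℬ₁.card
  set j := ℬ₂.card
  have hch : 2 * (j.choose 2) = j * (j - 1) := by
    rw [Nat.choose_two_right]
    apply Nat.mul_div_cancel'
    rcases j with _ | j'
    · simp
    · simpa [Nat.mul_comm] using (Nat.even_mul_succ_self j').two_dvd
  have hmain : 2 * S.card ≤ 2 * k + j * (j - 1) := by omega
  have h3 : 3 ≤ k + j := by
    by_contra h
    push_neg at h
    have hj : j ≤ 2 := by omega
    interval_cases j <;> omega
  have harith := arith_helper k j h3
  refine ⟨by omega, ?_⟩
  rw [← hBsplit]
  omega

private lemma ceil_eq (s m : ℕ) (hm3 : 3 ≤ m) (hlow : (m - 1) * (m - 2) < 2 * s)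
    (hhigh : 2 * s ≤ m * (m - 1)) :
    ⌈(1 + Real.sqrt (8 * s + 1)) / 2⌉ = (m : ℤ) := by
  obtain ⟨m', rfl⟩ : ∃ m', m = m' + 3 := ⟨m - 3, by omega⟩
  have hlow' : ((m' : ℝ) + 2) * ((m' : ℝ) + 1) < 2 * s := by
    have : (m' + 2) * (m' + 1) < 2 * s := by
      have h1 : m' + 3 - 1 = m' + 2 := by omega
      have h2 : m' + 3 - 2 = m' + 1 := by omega
      rw [h1, h2] at hlow; exact hlow
    exact_mod_cast this
  have hhigh' : 2 * (s : ℝ) ≤ ((m' : ℝ) + 3) * ((m' : ℝ) + 2) := by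
    have : 2 * s ≤ (m' + 3) * (m' + 2) := by
      have h1 : m' + 3 - 1 = m' + 2 := by omega
      rw [h1] at hhigh; exact hhigh
    exact_mod_cast this
  rw [Int.ceil_eq_iff]
  constructor
  · have h1 : (2 * ((m' : ℝ) + 3) - 3) < Real.sqrt (8 * s + 1) := by
      rw [show (2 * ((m' : ℝ) + 3) - 3) = 2 * (m' : ℝ) + 3 by ring]
      rw [Real.lt_sqrt (by positivity)]
      nlinarith
    push_cast
    linarith
  · have h1 : Real.sqrt (8 * s + 1) ≤ 2 * ((m' : ℝ) + 3) - 1 := by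
      have hle : (8 * (s : ℝ) + 1) ≤ (2 * ((m' : ℝ) + 3) - 1) ^ 2 := by nlinarith
      calc Real.sqrt (8 * s + 1) ≤ Real.sqrt ((2 * ((m' : ℝ) + 3) - 1) ^ 2) :=
            Real.sqrt_le_sqrt hle
        _ = 2 * ((m' : ℝ) + 3) - 1 := Real.sqrt_sq (by linarith [show (0:ℝ) ≤ m' from Nat.cast_nonneg m'])
    push_cast
    linarith


theorem stmt_18 {α : Type*} [DecidableEq α] (S : Finset α) (hS : 3 ≤ S.card) :
    (∃ 𝒜 : Finset (Finset α), (∀ A ∈ 𝒜, A ⊆ S) ∧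
        (∀ a ∈ S, ∃ A ∈ 𝒜, ∃ B ∈ 𝒜, A ∩ B = {a}) ∧
        (𝒜.card : ℤ) = ⌈(1 + Real.sqrt (8 * S.card + 1)) / 2⌉) ∧
    (∀ ℬ : Finset (Finset α), (∀ B ∈ ℬ, B ⊆ S) →
        (∀ a ∈ S, ∃ A ∈ ℬ, ∃ B ∈ ℬ, A ∩ B = {a}) →
        ((∀ 𝒞 : Finset (Finset α), (∀ C ∈ 𝒞, C ⊆ S) →
            (∀ a ∈ S, ∃ A ∈ 𝒞, ∃ B ∈ 𝒞, A ∩ B = {a}) → ℬ.card ≤ 𝒞.card) ↔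
          (ℬ.card : ℤ) = ⌈(1 + Real.sqrt (8 * S.card + 1)) / 2⌉)) := by
  classical
  have hex : ∃ m, 3 ≤ m ∧ 2 * S.card ≤ m * (m - 1) := by
    refine ⟨2 * S.card, by omega, ?_⟩
    exact Nat.le_mul_of_pos_right _ (by omega)
  set m := Nat.find hex with hm
  obtain ⟨hm3, hhigh⟩ : 3 ≤ m ∧ 2 * S.card ≤ m * (m - 1) := Nat.find_spec hex
  have hlow : (m - 1) * (m - 2) < 2 * S.card := by
    by_cases h4 : 4 ≤ m
    · have hmin := Nat.find_min hex (show m - 1 < m by omega)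
      push_neg at hmin
      by_contra hc
      push_neg at hc
      have := hmin (by omega)
      have h2 : m - 1 - 1 = m - 2 := by omega
      rw [h2] at this
      omega
    · have hm3' : m = 3 := by omega
      rw [hm3']
      omega
  have hceil := ceil_eq S.card m hm3 hlow hhigh
  obtain ⟨𝒜, hsub, hsep, hcard⟩ := construction S m hm3 hlow hhigh hS
  have hlb : ∀ 𝒞 : Finset (Finset α),
      (∀ a ∈ S, ∃ A ∈ 𝒞, ∃ B ∈ 𝒞, A ∩ B = {a}) → m ≤ 𝒞.card := by
    intro 𝒞 hsep'
    obtain ⟨h1, h2⟩ := lowerbound S hS 𝒞 hsep'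
    exact Nat.find_le ⟨h1, h2⟩
  constructor
  · refine ⟨𝒜, hsub, hsep, ?_⟩
    rw [hcard, ← hceil]
  · intro ℬ hBsub hBsep
    constructor
    · intro hmin
      have h4 : ℬ.card ≤ m := hcard ▸ hmin 𝒜 hsub hsep
      have h5 : m ≤ ℬ.card := hlb ℬ hBsep
      have : ℬ.card = m := by omega
      rw [this, ← hceil]
    · intro heq 𝒞 _ hCsep
      have h1 : (ℬ.card : ℤ) = m := by rw [heq, hceil]
      have h2 : ℬ.card = m := by exact_mod_cast h1
      have h3 := hlb 𝒞 hCsep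
      omega
end

section
/- Let k ≥ 3 and let S be a finite set with |S| = α(k) = k(k+1)/2. Then any two size-minimal HCSP-systems on S are isomorphic, i.e., there is a bijection φ: S → S with ℬ = {φ(A) : A ∈ 𝒜} for any two size-minimal HCSP-systems 𝒜, ℬ on S. -/
private lemma tri2 (n : ℕ) : 2 * (n*(n+1)/2) = n*(n+1) :=
  Nat.mul_div_cancel' (Nat.even_mul_succ_self n).two_dvd

private lemma tri_succ (n : ℕ) : (n+1)*(n+2)/2 = n*(n+1)/2 + (n+1) := by
  have e : (n+1)*(n+2) = n*(n+1) + (n+1)*2 := by ring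
  rw [e, Nat.add_mul_div_right _ _ (by norm_num : (0:ℕ) < 2)]

private lemma tri_le_tri {a b : ℕ} (h : a ≤ b) : a*(a+1)/2 ≤ b*(b+1)/2 :=
  Nat.div_le_div_right (Nat.mul_le_mul h (by omega))

private lemma tri_lt_tri {a b : ℕ} (h : a < b) : a*(a+1)/2 < b*(b+1)/2 := by
  have h1 := tri_succ a
  have h2 : (a+1)*(a+2)/2 ≤ b*(b+1)/2 := tri_le_tri h
  linarith

private lemma tri_le_iff {a b : ℕ} : a*(a+1)/2 ≤ b*(b+1)/2 ↔ a ≤ b := by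
  constructor
  · intro h; by_contra hc
    exact absurd (tri_lt_tri (by omega : b < a)) (by omega)
  · exact tri_le_tri

private def od {β : Type*} [DecidableEq β] (s : Finset β) : Finset (Sym2 β) :=
  s.sym2 \ s.image Sym2.diag

private lemma mem_od {β : Type*} [DecidableEq β] {s : Finset β} {A B : β} :
    s(A,B) ∈ od s ↔ A ∈ s ∧ B ∈ s ∧ A ≠ B := by
  simp only [od, Finset.mem_sdiff, Finset.mk_mem_sym2_iff, Finset.mem_image]
  constructor
  · rintro ⟨⟨hA, hB⟩, hd⟩
    refine ⟨hA, hB, fun h => hd ⟨A, hA, ?_⟩⟩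
    subst h; rfl
  · rintro ⟨hA, hB, hne⟩
    refine ⟨⟨hA, hB⟩, ?_⟩
    rintro ⟨c, _, hcd⟩
    rw [show Sym2.diag c = s(c,c) from rfl, Sym2.eq_iff] at hcd
    rcases hcd with ⟨h1, h2⟩ | ⟨h1, h2⟩ <;> exact hne (h1 ▸ h2 ▸ rfl)

private lemma card_od {β : Type*} [DecidableEq β] {s : Finset β} {n : ℕ} (h : s.card = n + 1) :
    (od s).card = n*(n+1)/2 := by
  have hsub : s.image Sym2.diag ⊆ s.sym2 := by
    intro z hz
    simp only [Finset.mem_image] at hz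
    obtain ⟨a, ha, rfl⟩ := hz
    exact Finset.mk_mem_sym2_iff.mpr ⟨ha, ha⟩
  have h1 : s.sym2.card = (n+1)*(n+2)/2 := by
    rw [Finset.card_sym2, h, Nat.choose_two_right,
      show n+1+1-1 = n+1 from rfl, Nat.mul_comm]
  have h2 : (s.image Sym2.diag).card = n+1 := by
    rw [Finset.card_image_of_injective _ Sym2.diag_injective, h]
  rw [od, Finset.card_sdiff_of_subset hsub, h1, h2, tri_succ, Nat.add_sub_cancel]

private lemma sym2_cases {β : Type*} (z : Sym2 β) : ∃ i j, z = s(i,j) := by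
  induction z using Sym2.ind with
  | _ i j => exact ⟨i, j, rfl⟩

private lemma sym2_eq_of_mem {β : Type*} {i j p q : β} (hij : i ≠ j)
    (hi : i ∈ (s(p,q) : Sym2 β)) (hj : j ∈ (s(p,q) : Sym2 β)) : s(p,q) = s(i,j) := by
  rw [Sym2.mem_iff] at hi hj
  rcases hi with rfl | rfl <;> rcases hj with rfl | rfl
  · exact absurd rfl hij
  · rfl
  · exact Sym2.eq_swap
  · exact absurd rfl hij

private lemma card_min {α : Type*} [DecidableEq α] (k : ℕ) (hk : 3 ≤ k)
    (S : Finset α) (hS : S.card = k * (k + 1) / 2)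
    (𝒜 : Finset (Finset α))
    (hcov : ∀ a ∈ S, ∃ A ∈ 𝒜, ∃ B ∈ 𝒜, A ∩ B = {a})
    (hmin : ∀ 𝒞 : Finset (Finset α), (∀ C ∈ 𝒞, C ⊆ S) →
        (∀ a ∈ S, ∃ A ∈ 𝒞, ∃ B ∈ 𝒞, A ∩ B = {a}) → 𝒜.card ≤ 𝒞.card) :
    𝒜.card = k + 1 := by
  -- Upper bound: construct a system of ≤ k+1 sets
  have hupper : 𝒜.card ≤ k + 1 := by
    classical
    set R : Finset ℕ := Finset.range (k+1) with hR
    have hRcard : R.card = k + 1 := Finset.card_range _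
    have hOcard : (od R).card = k*(k+1)/2 := card_od hRcard
    have hcards : S.card = (od R).card := by rw [hS, hOcard]
    set eqv := Finset.equivOfCardEq hcards with heqv
    set v : α → Sym2 ℕ := fun a => if ha : a ∈ S then ((eqv ⟨a, ha⟩ : {x // x ∈ od R}) : Sym2 ℕ) else s(0,0) with hv
    have hvmem : ∀ a (ha : a ∈ S), v a ∈ od R := by
      intro a ha
      simp only [hv, dif_pos ha]
      exact (eqv ⟨a, ha⟩).2
    have hvinj : ∀ a ∈ S, ∀ b ∈ S, v a = v b → a = b := by
      intro a ha b hb hab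
      simp only [hv, dif_pos ha, dif_pos hb] at hab
      have := eqv.injective (Subtype.ext hab)
      exact congrArg Subtype.val this
    set C : ℕ → Finset α := fun i => S.filter (fun a => i ∈ v a) with hC
    set 𝒞 : Finset (Finset α) := R.image C with h𝒞
    have hsub : ∀ X ∈ 𝒞, X ⊆ S := by
      intro X hX
      simp only [h𝒞, Finset.mem_image] at hX
      obtain ⟨i, _, rfl⟩ := hX
      exact Finset.filter_subset _ _
    have hhcsp : ∀ a ∈ S, ∃ A ∈ 𝒞, ∃ B ∈ 𝒞, A ∩ B = {a} := by
      intro a ha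
      obtain ⟨i, j, hij⟩ := sym2_cases (v a)
      have hmem : s(i,j) ∈ od R := hij ▸ hvmem a ha
      obtain ⟨hiR, hjR, hne⟩ := mem_od.mp hmem
      refine ⟨C i, Finset.mem_image_of_mem C hiR, C j, Finset.mem_image_of_mem C hjR, ?_⟩
      ext b
      simp only [Finset.mem_inter, hC, Finset.mem_filter, Finset.mem_singleton]
      constructor
      · rintro ⟨⟨hbS, hib⟩, -, hjb⟩
        obtain ⟨p, q, hpq⟩ := sym2_cases (v b)
        rw [hpq] at hib hjb
        have : v b = s(i,j) := hpq.trans (sym2_eq_of_mem hne hib hjb)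
        exact hvinj b hbS a ha (this.trans hij.symm)
      · rintro rfl
        have h1 : i ∈ v b := by rw [hij]; exact Sym2.mem_mk_left i j
        have h2 : j ∈ v b := by rw [hij]; exact Sym2.mem_mk_right i j
        exact ⟨⟨ha, h1⟩, ha, h2⟩
    calc 𝒜.card ≤ 𝒞.card := hmin 𝒞 hsub hhcsp
      _ ≤ R.card := Finset.card_image_le
      _ = k + 1 := hRcard
  -- Lower bound
  classical
  have hcov' : ∀ a : α, ∃ A B : Finset α, a ∈ S → (A ∈ 𝒜 ∧ B ∈ 𝒜 ∧ A ∩ B = {a}) := by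
    intro a
    by_cases ha : a ∈ S
    · obtain ⟨A, hA, B, hB, hAB⟩ := hcov a ha
      exact ⟨A, B, fun _ => ⟨hA, hB, hAB⟩⟩
    · exact ⟨∅, ∅, fun h => absurd h ha⟩
  choose F G hFG using hcov'
  set h : α → Sym2 (Finset α) := fun a => s(F a, G a) with hh
  have hmem : ∀ a ∈ S, h a ∈ 𝒜.sym2 := fun a ha =>
    Finset.mk_mem_sym2_iff.mpr ⟨(hFG a ha).1, (hFG a ha).2.1⟩
  have haF : ∀ a ∈ S, a ∈ F a ∧ a ∈ G a := by
    intro a ha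
    have h1 : a ∈ F a ∩ G a := (hFG a ha).2.2 ▸ Finset.mem_singleton_self a
    exact ⟨(Finset.mem_inter.mp h1).1, (Finset.mem_inter.mp h1).2⟩
  have hinj : ∀ a ∈ S, ∀ b ∈ S, h a = h b → a = b := by
    intro a ha b hb hab
    simp only [hh, Sym2.eq_iff] at hab
    have h1 : F a ∩ G a = F b ∩ G b := by
      rcases hab with ⟨e1, e2⟩ | ⟨e1, e2⟩
      · rw [e1, e2]
      · rw [e1, e2, Finset.inter_comm]
    have := ((hFG a ha).2.2.symm.trans h1).trans (hFG b hb).2.2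
    exact Finset.singleton_injective this
  have hcard_le : S.card ≤ 𝒜.sym2.card :=
    Finset.card_le_card_of_injOn h (fun a ha => hmem a ha)
      (fun a ha b hb => hinj a ha b hb)
  have hsym2card : 𝒜.sym2.card = 𝒜.card * (𝒜.card + 1)/2 := by
    rw [Finset.card_sym2, Nat.choose_two_right, show 𝒜.card + 1 - 1 = 𝒜.card from rfl,
      Nat.mul_comm]
  have hklem : k ≤ 𝒜.card := by
    rw [hsym2card, hS] at hcard_le
    exact tri_le_iff.mp hcard_le
  -- rule out 𝒜.card = k
  rcases Nat.lt_or_ge 𝒜.card (k+1) with hlt | hge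
  · exfalso
    have hmk : 𝒜.card = k := by omega
    have him : S.image h = 𝒜.sym2 := by
      apply Finset.eq_of_subset_of_card_le
      · intro z hz
        obtain ⟨a, ha, rfl⟩ := Finset.mem_image.mp hz
        exact hmem a ha
      · rw [Finset.card_image_of_injOn (fun a ha b hb => hinj a ha b hb),
          hsym2card, hmk, hS]
    have hsing : ∀ a ∈ S, ({a} : Finset α) ∈ 𝒜 := by
      intro a ha
      have hFa := (hFG a ha).1
      have : s(F a, F a) ∈ S.image h := him ▸ Finset.mk_mem_sym2_iff.mpr ⟨hFa, hFa⟩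
      obtain ⟨b, hb, hba⟩ := Finset.mem_image.mp this
      simp only [hh, Sym2.eq_iff] at hba
      have hFb : F b = F a := by tauto
      have hGb : G b = F a := by tauto
      have hFab : F a = {b} := by
        have := (hFG b hb).2.2
        rwa [hFb, hGb, Finset.inter_self] at this
      have haFa := (haF a ha).1
      rw [hFab, Finset.mem_singleton] at haFa
      subst haFa
      exact hFab ▸ hFa
    have : S.card ≤ 𝒜.card := by
      apply Finset.card_le_card_of_injOn (fun a => ({a} : Finset α))
        (fun a ha => hsing a ha)
      intro a _ b _ hab
      exact Finset.singleton_injective hab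
    rw [hS, hmk] at this
    have h2 := tri2 k
    nlinarith
  · omega

private lemma struct {α : Type*} [DecidableEq α] (k : ℕ) (hk : 3 ≤ k)
    (S : Finset α) (hS : S.card = k * (k + 1) / 2)
    (𝒜 : Finset (Finset α))
    (hsub : ∀ A ∈ 𝒜, A ⊆ S)
    (hcov : ∀ a ∈ S, ∃ A ∈ 𝒜, ∃ B ∈ 𝒜, A ∩ B = {a})
    (hcard : 𝒜.card = k + 1) :
    (∀ a ∈ S, ∃ A ∈ 𝒜, ∃ B ∈ 𝒜, A ≠ B ∧ A ∩ B = {a}) ∧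
    (∀ A ∈ 𝒜, ∀ B ∈ 𝒜, A ≠ B → ∃ a ∈ S, A ∩ B = {a}) ∧
    (∀ A ∈ 𝒜, ∀ B ∈ 𝒜, ∀ C ∈ 𝒜, ∀ D ∈ 𝒜, A ≠ B → C ≠ D → A ∩ B = C ∩ D →
      (A = C ∧ B = D) ∨ (A = D ∧ B = C)) ∧
    (∀ A ∈ 𝒜, ∀ x ∈ A, ∃ B ∈ 𝒜, B ≠ A ∧ A ∩ B = {x}) := by
  classical
  have hcov' : ∀ a : α, ∃ A B : Finset α, a ∈ S → (A ∈ 𝒜 ∧ B ∈ 𝒜 ∧ A ∩ B = {a}) := by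
    intro a
    by_cases ha : a ∈ S
    · obtain ⟨A, hA, B, hB, hAB⟩ := hcov a ha
      exact ⟨A, B, fun _ => ⟨hA, hB, hAB⟩⟩
    · exact ⟨∅, ∅, fun h => absurd h ha⟩
  choose F G hFG using hcov'
  set h : α → Sym2 (Finset α) := fun a => s(F a, G a) with hh
  have haF : ∀ a ∈ S, a ∈ F a ∧ a ∈ G a := by
    intro a ha
    have h1 : a ∈ F a ∩ G a := (hFG a ha).2.2 ▸ Finset.mem_singleton_self a
    exact ⟨(Finset.mem_inter.mp h1).1, (Finset.mem_inter.mp h1).2⟩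
  have hinj : ∀ a ∈ S, ∀ b ∈ S, h a = h b → a = b := by
    intro a ha b hb hab
    simp only [hh, Sym2.eq_iff] at hab
    have h1 : F a ∩ G a = F b ∩ G b := by
      rcases hab with ⟨e1, e2⟩ | ⟨e1, e2⟩
      · rw [e1, e2]
      · rw [e1, e2, Finset.inter_comm]
    have := ((hFG a ha).2.2.symm.trans h1).trans (hFG b hb).2.2
    exact Finset.singleton_injective this
  -- Step A: no singletons in 𝒜
  have hns : ∀ A ∈ 𝒜, ∀ x : α, A ≠ {x} := by
    intro A₀ hA₀ x hx
    subst hx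
    have hxS : x ∈ S := hsub _ hA₀ (Finset.mem_singleton_self x)
    set S' := S.erase x with hS'
    set 𝒜' := 𝒜.erase {x} with h𝒜'
    have h𝒜'card : 𝒜'.card = k := by
      rw [h𝒜', Finset.card_erase_of_mem hA₀, hcard]
      omega
    have hFGne : ∀ a ∈ S', F a ∈ 𝒜' ∧ G a ∈ 𝒜' := by
      intro a ha
      have haS : a ∈ S := Finset.mem_of_mem_erase ha
      have hax : a ≠ x := Finset.ne_of_mem_erase ha
      constructor
      · refine Finset.mem_erase.mpr ⟨?_, (hFG a haS).1⟩
        intro hFa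
        have := (haF a haS).1
        rw [hFa, Finset.mem_singleton] at this
        exact hax this
      · refine Finset.mem_erase.mpr ⟨?_, (hFG a haS).2.1⟩
        intro hGa
        have := (haF a haS).2
        rw [hGa, Finset.mem_singleton] at this
        exact hax this
    set im := S'.image h with him
    have himsub : im ⊆ 𝒜'.sym2 := by
      intro z hz
      obtain ⟨a, ha, rfl⟩ := Finset.mem_image.mp hz
      exact Finset.mk_mem_sym2_iff.mpr ⟨(hFGne a ha).1, (hFGne a ha).2⟩
    have himcard : im.card = S.card - 1 := by
      rw [him, Finset.card_image_of_injOn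
        (fun a ha b hb => hinj a (Finset.mem_of_mem_erase ha) b (Finset.mem_of_mem_erase hb)),
        Finset.card_erase_of_mem hxS]
    have hsym2' : 𝒜'.sym2.card = k*(k+1)/2 := by
      rw [Finset.card_sym2, h𝒜'card, Nat.choose_two_right,
        show k + 1 - 1 = k by omega, Nat.mul_comm]
    have hScard6 : 6 ≤ S.card := by
      have := tri2 k
      nlinarith
    have hdiffcard : (𝒜'.sym2 \ im).card = 1 := by
      rw [Finset.card_sdiff_of_subset himsub, hsym2', himcard, hS]
      omega
    -- sets of 𝒜' whose diagonal is hit are singletons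
    have hdiagsing : ∀ A ∈ 𝒜', Sym2.diag A ∈ im → ∃ b, A = {b} := by
      intro A hA hdi
      obtain ⟨a, ha, hha⟩ := Finset.mem_image.mp hdi
      have haS : a ∈ S := Finset.mem_of_mem_erase ha
      rw [show Sym2.diag A = s(A,A) from rfl] at hha
      simp only [hh, Sym2.eq_iff] at hha
      have hFa : F a = A := by tauto
      have hGa : G a = A := by tauto
      refine ⟨a, ?_⟩
      have := (hFG a haS).2.2
      rwa [hFa, hGa, Finset.inter_self] at this
    -- the non-singleton sets in 𝒜' number at most 1
    set N := 𝒜'.filter (fun A => ∀ b : α, A ≠ {b}) with hN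
    have hNcard : N.card ≤ 1 := by
      have : ∀ A ∈ N, Sym2.diag A ∈ 𝒜'.sym2 \ im := by
        intro A hA
        obtain ⟨hA', hAns⟩ := Finset.mem_filter.mp hA
        refine Finset.mem_sdiff.mpr ⟨Finset.mk_mem_sym2_iff.mpr ⟨hA', hA'⟩, ?_⟩
        intro hdi
        obtain ⟨b, hb⟩ := hdiagsing A hA' hdi
        exact hAns b hb
      have := Finset.card_le_card_of_injOn Sym2.diag this
        (fun a _ b _ hab => Sym2.diag_injective hab)
      omega
    -- every element of S' gives a singleton in 𝒜
    have hsing : ∀ a ∈ S', ({a} : Finset α) ∈ 𝒜 := by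
      intro a ha
      have haS : a ∈ S := Finset.mem_of_mem_erase ha
      by_cases hFs : ∃ b, F a = {b}
      · obtain ⟨b, hb⟩ := hFs
        have := (haF a haS).1
        rw [hb, Finset.mem_singleton] at this
        subst this
        exact hb ▸ (hFG a haS).1
      by_cases hGs : ∃ b, G a = {b}
      · obtain ⟨b, hb⟩ := hGs
        have := (haF a haS).2
        rw [hb, Finset.mem_singleton] at this
        subst this
        exact hb ▸ (hFG a haS).2.1
      exfalso
      push_neg at hFs hGs
      have hFN : F a ∈ N := Finset.mem_filter.mpr ⟨(hFGne a ha).1, hFs⟩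
      have hGN : G a ∈ N := Finset.mem_filter.mpr ⟨(hFGne a ha).2, hGs⟩
      by_cases hFG' : F a = G a
      · have := (hFG a haS).2.2
        rw [hFG', Finset.inter_self] at this
        exact hGs a this
      · have := Finset.card_le_one.mp hNcard _ hFN _ hGN
        exact hFG' this
    have hfin : S'.card ≤ 𝒜.card := by
      apply Finset.card_le_card_of_injOn (fun a => ({a} : Finset α))
        (fun a ha => hsing a ha)
      intro a _ b _ hab
      exact Finset.singleton_injective hab
    rw [Finset.card_erase_of_mem hxS, hcard] at hfin
    have := tri2 k
    have hle : S.card ≤ k + 2 := by omega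
    rw [hS] at hle
    nlinarith
  -- Step B: F a ≠ G a, and h restricted to S is a bijection onto od 𝒜
  have hdiag : ∀ a ∈ S, F a ≠ G a := by
    intro a ha hFG'
    have := (hFG a ha).2.2
    rw [hFG', Finset.inter_self] at this
    exact hns _ (hFG a ha).2.1 a this
  have hmemod : ∀ a ∈ S, h a ∈ od 𝒜 := fun a ha =>
    mem_od.mpr ⟨(hFG a ha).1, (hFG a ha).2.1, hdiag a ha⟩
  have hodcard : (od 𝒜).card = k*(k+1)/2 := card_od hcard
  have him : S.image h = od 𝒜 := by
    apply Finset.eq_of_subset_of_card_le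
    · intro z hz
      obtain ⟨a, ha, rfl⟩ := Finset.mem_image.mp hz
      exact hmemod a ha
    · rw [Finset.card_image_of_injOn (fun a ha b hb => hinj a ha b hb), hS, hodcard]
  -- K2
  have K2 : ∀ A ∈ 𝒜, ∀ B ∈ 𝒜, A ≠ B → ∃ a ∈ S, A ∩ B = {a} := by
    intro A hA B hB hAB
    have : s(A,B) ∈ S.image h := him ▸ mem_od.mpr ⟨hA, hB, hAB⟩
    obtain ⟨a, ha, hha⟩ := Finset.mem_image.mp this
    refine ⟨a, ha, ?_⟩
    simp only [hh, Sym2.eq_iff] at hha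
    have := (hFG a ha).2.2
    rcases hha with ⟨e1, e2⟩ | ⟨e1, e2⟩
    · rw [e1, e2] at this; exact this
    · rw [e1, e2, Finset.inter_comm] at this; exact this
  -- uniqueness of representation
  have Kuniq : ∀ A ∈ 𝒜, ∀ B ∈ 𝒜, A ≠ B → ∀ a, A ∩ B = {a} → s(A,B) = h a := by
    intro A hA B hB hAB a hab
    have : s(A,B) ∈ S.image h := him ▸ mem_od.mpr ⟨hA, hB, hAB⟩
    obtain ⟨b, hb, hhb⟩ := Finset.mem_image.mp this
    have hABb : A ∩ B = {b} := by
      simp only [hh, Sym2.eq_iff] at hhb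
      have := (hFG b hb).2.2
      rcases hhb with ⟨e1, e2⟩ | ⟨e1, e2⟩
      · rw [e1, e2] at this; exact this
      · rw [e1, e2, Finset.inter_comm] at this; exact this
    have hba : b = a := Finset.singleton_injective (hABb ▸ hab)
    rw [← hba, ← hhb]
  -- K3
  have K3 : ∀ A ∈ 𝒜, ∀ B ∈ 𝒜, ∀ C ∈ 𝒜, ∀ D ∈ 𝒜, A ≠ B → C ≠ D → A ∩ B = C ∩ D →
      (A = C ∧ B = D) ∨ (A = D ∧ B = C) := by
    intro A hA B hB C hC D hD hAB hCD heq
    obtain ⟨a, ha, hab⟩ := K2 A hA B hB hAB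
    have h1 := Kuniq A hA B hB hAB a hab
    have h2 := Kuniq C hC D hD hCD a (heq ▸ hab)
    have := h1.trans h2.symm
    exact Sym2.eq_iff.mp this
  -- K4
  have K4 : ∀ A ∈ 𝒜, ∀ x ∈ A, ∃ B ∈ 𝒜, B ≠ A ∧ A ∩ B = {x} := by
    intro A hA x hx
    have hxS : x ∈ S := hsub A hA hx
    have hFx := (hFG x hxS).1
    have hGx := (hFG x hxS).2.1
    have hI := (hFG x hxS).2.2
    by_cases hAF : A = F x
    · exact ⟨G x, hGx, fun e => hdiag x hxS (hAF.symm.trans e.symm), hAF ▸ hI⟩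
    by_cases hAG : A = G x
    · refine ⟨F x, hFx, fun e => hdiag x hxS (e.trans hAG), ?_⟩
      rw [hAG, Finset.inter_comm]; exact hI
    exfalso
    -- x ∈ A ∩ F x, A ≠ F x gives contradiction
    obtain ⟨c, hc, hAFc⟩ := K2 A hA (F x) hFx hAF
    have hxc : x ∈ A ∩ F x := Finset.mem_inter.mpr ⟨hx, (haF x hxS).1⟩
    rw [hAFc, Finset.mem_singleton] at hxc
    subst hxc
    have := Kuniq A hA (F x) hFx hAF x hAFc
    simp only [hh, Sym2.eq_iff] at this
    rcases this with ⟨e1, _⟩ | ⟨e1, _⟩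
    · exact hAF e1
    · exact hAG e1
  refine ⟨?_, K2, K3, K4⟩
  intro a ha
  exact ⟨F a, (hFG a ha).1, G a, (hFG a ha).2.1, hdiag a ha, (hFG a ha).2.2⟩

theorem stmt_19 {α : Type*} [DecidableEq α] (k : ℕ) (hk : 3 ≤ k)
    (S : Finset α) (hS : S.card = k * (k + 1) / 2)
    (𝒜 ℬ : Finset (Finset α))
    (h𝒜sub : ∀ A ∈ 𝒜, A ⊆ S) (hℬsub : ∀ B ∈ ℬ, B ⊆ S)
    (h𝒜 : ∀ a ∈ S, ∃ A ∈ 𝒜, ∃ B ∈ 𝒜, A ∩ B = {a})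
    (hℬ : ∀ a ∈ S, ∃ A ∈ ℬ, ∃ B ∈ ℬ, A ∩ B = {a})
    (h𝒜min : ∀ 𝒞 : Finset (Finset α), (∀ C ∈ 𝒞, C ⊆ S) →
        (∀ a ∈ S, ∃ A ∈ 𝒞, ∃ B ∈ 𝒞, A ∩ B = {a}) → 𝒜.card ≤ 𝒞.card)
    (hℬmin : ∀ 𝒞 : Finset (Finset α), (∀ C ∈ 𝒞, C ⊆ S) →
        (∀ a ∈ S, ∃ A ∈ 𝒞, ∃ B ∈ 𝒞, A ∩ B = {a}) → ℬ.card ≤ 𝒞.card) :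
    ∃ φ : α ≃ α, (∀ a ∈ S, φ a ∈ S) ∧ ℬ = 𝒜.image (Finset.image φ) := by
  classical
  have hAcard : 𝒜.card = k + 1 := card_min k hk S hS 𝒜 h𝒜 h𝒜min
  have hBcard : ℬ.card = k + 1 := card_min k hk S hS ℬ hℬ hℬmin
  obtain ⟨K1a, K2a, K3a, K4a⟩ := struct k hk S hS 𝒜 h𝒜sub h𝒜 hAcard
  obtain ⟨K1b, K2b, K3b, K4b⟩ := struct k hk S hS ℬ hℬsub hℬ hBcard
  -- a default element of S
  have hSpos : 0 < S.card := by
    have := tri2 k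
    nlinarith
  obtain ⟨x₀, hx₀⟩ := Finset.card_pos.mp hSpos
  -- the bijection between 𝒜 and ℬ
  set e := Finset.equivOfCardEq (hAcard.trans hBcard.symm) with he
  set g : Finset α → Finset α :=
    fun X => if hX : X ∈ 𝒜 then ((e ⟨X, hX⟩ : {x // x ∈ ℬ}) : Finset α) else ∅ with hg
  have hg_mem : ∀ X ∈ 𝒜, g X ∈ ℬ := by
    intro X hX
    simp only [hg, dif_pos hX]
    exact (e ⟨X, hX⟩).2
  have hg_inj : ∀ X ∈ 𝒜, ∀ Y ∈ 𝒜, g X = g Y → X = Y := by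
    intro X hX Y hY hXY
    simp only [hg, dif_pos hX, dif_pos hY] at hXY
    have := e.injective (Subtype.ext hXY)
    exact congrArg Subtype.val this
  have hg_surj : ∀ Y ∈ ℬ, ∃ X ∈ 𝒜, g X = Y := by
    intro Y hY
    refine ⟨(e.symm ⟨Y, hY⟩ : {x // x ∈ 𝒜}), (e.symm ⟨Y, hY⟩).2, ?_⟩
    simp only [hg, dif_pos (e.symm ⟨Y, hY⟩).2]
    rw [show (⟨((e.symm ⟨Y, hY⟩ : {x // x ∈ 𝒜}) : Finset α), (e.symm ⟨Y, hY⟩).2⟩ :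
      {x // x ∈ 𝒜}) = e.symm ⟨Y, hY⟩ from Subtype.ext rfl, e.apply_symm_apply]
  -- choice functions
  have K2b' : ∀ X Y : Finset α, ∃ b : α,
      X ∈ ℬ → Y ∈ ℬ → X ≠ Y → b ∈ S ∧ X ∩ Y = {b} := by
    intro X Y
    by_cases hc : X ∈ ℬ ∧ Y ∈ ℬ ∧ X ≠ Y
    · obtain ⟨b, hbS, hb⟩ := K2b X hc.1 Y hc.2.1 hc.2.2
      exact ⟨b, fun _ _ _ => ⟨hbS, hb⟩⟩
    · exact ⟨x₀, fun h1 h2 h3 => absurd ⟨h1, h2, h3⟩ hc⟩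
  choose q hq using K2b'
  have K1a' : ∀ a : α, ∃ A B : Finset α,
      a ∈ S → (A ∈ 𝒜 ∧ B ∈ 𝒜 ∧ A ≠ B ∧ A ∩ B = {a}) := by
    intro a
    by_cases ha : a ∈ S
    · obtain ⟨A, hA, B, hB, hne, hAB⟩ := K1a a ha
      exact ⟨A, B, fun _ => ⟨hA, hB, hne, hAB⟩⟩
    · exact ⟨∅, ∅, fun h => absurd h ha⟩
  choose F G hFG using K1a'
  set φ₀ : α → α := fun a => q (g (F a)) (g (G a)) with hφ₀def
  have hgFG : ∀ a ∈ S, g (F a) ∈ ℬ ∧ g (G a) ∈ ℬ ∧ g (F a) ≠ g (G a) := by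
    intro a ha
    obtain ⟨hFa, hGa, hne, _⟩ := hFG a ha
    exact ⟨hg_mem _ hFa, hg_mem _ hGa,
      fun h => hne (hg_inj _ hFa _ hGa h)⟩
  have hφ₀ : ∀ a ∈ S, φ₀ a ∈ S ∧ g (F a) ∩ g (G a) = {φ₀ a} := by
    intro a ha
    obtain ⟨h1, h2, h3⟩ := hgFG a ha
    exact hq _ _ h1 h2 h3
  have hφ₀inj : ∀ a ∈ S, ∀ b ∈ S, φ₀ a = φ₀ b → a = b := by
    intro a ha b hb hab
    obtain ⟨hFa, hGa, hnea, hia⟩ := hFG a ha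
    obtain ⟨hFb, hGb, hneb, hib⟩ := hFG b hb
    have h1 : g (F a) ∩ g (G a) = g (F b) ∩ g (G b) := by
      rw [(hφ₀ a ha).2, (hφ₀ b hb).2, hab]
    obtain ⟨e1, e2⟩ | ⟨e1, e2⟩ := K3b _ (hgFG a ha).1 _ (hgFG a ha).2.1
      _ (hgFG b hb).1 _ (hgFG b hb).2.1 (hgFG a ha).2.2 (hgFG b hb).2.2 h1
    · have eF : F a = F b := hg_inj _ hFa _ hFb e1
      have eG : G a = G b := hg_inj _ hGa _ hGb e2
      have : F a ∩ G a = F b ∩ G b := by rw [eF, eG]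
      exact Finset.singleton_injective ((hia.symm.trans this).trans hib)
    · have eF : F a = G b := hg_inj _ hFa _ hGb e1
      have eG : G a = F b := hg_inj _ hGa _ hFb e2
      have : F a ∩ G a = F b ∩ G b := by rw [eF, eG, Finset.inter_comm]
      exact Finset.singleton_injective ((hia.symm.trans this).trans hib)
  -- build the permutation
  set ψ : {x // x ∈ S} → {x // x ∈ S} := fun a => ⟨φ₀ a, (hφ₀ a a.2).1⟩ with hψ
  have hψinj : Function.Injective ψ := by
    intro a b hab
    exact Subtype.ext (hφ₀inj a a.2 b b.2 (congrArg Subtype.val hab))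
  set eS : {x // x ∈ S} ≃ {x // x ∈ S} :=
    Equiv.ofBijective ψ (Finite.injective_iff_bijective.mp hψinj) with heS
  set φ : Equiv.Perm α := Equiv.Perm.subtypeCongr eS (Equiv.refl {x // ¬ x ∈ S}) with hφdef
  have hφval : ∀ a (ha : a ∈ S), φ a = φ₀ a := by
    intro a ha
    rw [hφdef, Equiv.Perm.subtypeCongr.left_apply _ _ ha]
    rfl
  refine ⟨φ, fun a ha => (hφval a ha) ▸ (hφ₀ a ha).1, ?_⟩
  -- the image of each A ∈ 𝒜 under φ is g A
  have himg : ∀ A ∈ 𝒜, A.image (⇑φ) = g A := by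
    intro A hA
    apply Finset.Subset.antisymm
    · intro y hy
      obtain ⟨x, hx, rfl⟩ := Finset.mem_image.mp hy
      have hxS : x ∈ S := h𝒜sub A hA hx
      rw [hφval x hxS]
      obtain ⟨B, hB, hBne, hABx⟩ := K4a A hA x hx
      obtain ⟨hFx, hGx, hnex, hix⟩ := hFG x hxS
      have hmem : φ₀ x ∈ g (F x) ∩ g (G x) :=
        (hφ₀ x hxS).2 ▸ Finset.mem_singleton_self _
      obtain ⟨e1, e2⟩ | ⟨e1, e2⟩ :=
        K3a A hA B hB _ hFx _ hGx (fun h => hBne h.symm) hnex (hABx.trans hix.symm)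
      · rw [e1]; exact (Finset.mem_inter.mp hmem).1
      · rw [e1]; exact (Finset.mem_inter.mp hmem).2
    · intro y hy
      have hgA : g A ∈ ℬ := hg_mem A hA
      obtain ⟨C, hC, hCne, hgACy⟩ := K4b (g A) hgA y hy
      obtain ⟨B, hB, rfl⟩ := hg_surj C hC
      have hBA : B ≠ A := fun h => hCne (by rw [h])
      obtain ⟨x, hxS, hABx⟩ := K2a A hA B hB (fun h => hBA h.symm)
      have hxA : x ∈ A := by
        have : x ∈ A ∩ B := hABx ▸ Finset.mem_singleton_self x
        exact (Finset.mem_inter.mp this).1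
      obtain ⟨hFx, hGx, hnex, hix⟩ := hFG x hxS
      have h1 : g (F x) ∩ g (G x) = {φ₀ x} := (hφ₀ x hxS).2
      have h2 : g (F x) ∩ g (G x) = {y} := by
        obtain ⟨e1, e2⟩ | ⟨e1, e2⟩ :=
          K3a _ hFx _ hGx A hA B hB hnex (fun h => hBA h.symm) (hix.trans hABx.symm)
        · rw [e1, e2]; exact hgACy
        · rw [e1, e2, Finset.inter_comm]; exact hgACy
      have : φ₀ x = y := Finset.singleton_injective (h1.symm.trans h2)
      exact Finset.mem_image.mpr ⟨x, hxA, (hφval x hxS).trans this⟩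
  have h2 : 𝒜.image (Finset.image ⇑φ) = 𝒜.image g :=
    Finset.image_congr (fun A hA => himg A hA)
  rw [h2]
  symm
  apply Finset.eq_of_subset_of_card_le
  · intro Y hY
    obtain ⟨A, hA, rfl⟩ := Finset.mem_image.mp hY
    exact hg_mem A hA
  · rw [Finset.card_image_of_injOn (fun X hX Y hY => hg_inj X hX Y hY), hAcard, hBcard]
end
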